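/- arXiv:2107.11248 — 6 statements merged into one kernel-verified Lean document; each statement's English description precedes it below -/
import Mathlib

section
/- Let $V$ be a $d$-dimensional real normed space, let $v_{i,j}\in V$ ($1\le i\le n$, $1\le j\le m$) satisfy $\|v_{i,j}\|\le 1$, and set $x_k=\frac{1}{m}\sum_{i=1}^k\sum_{j=1}^m v_{i,j}$. Then for every $p\in\{1,\dots,m\}$ there exist sets $I_1,\dots,I_n\subseteq\{1,\dots,m\}$ with $|I_k|=p$ for all $k$ and $\|\sum_{i=1}^k\sum_{j\in I_i}v_{i,j} - p\,x_k\| \le 8d^2$ for all $k=1,\dots,n$. -/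
open Finset

section Aux
variable {V : Type*} [NormedAddCommGroup V] [NormedSpace ℝ V] [FiniteDimensional ℝ V]
variable {n m p : ℕ}

noncomputable def frk (K : ℕ) (t : Fin n → Fin m → ℝ) : Finset (Fin n × Fin m) :=
  univ.filter (fun q => (q.1 : ℕ) < K ∧ t q.1 q.2 ≠ 0 ∧ t q.1 q.2 ≠ 1)

lemma mem_frk {K : ℕ} {t : Fin n → Fin m → ℝ} {q : Fin n × Fin m} :
    q ∈ frk K t ↔ (q.1 : ℕ) < K ∧ t q.1 q.2 ≠ 0 ∧ t q.1 q.2 ≠ 1 := by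
  simp [frk]

lemma exists_round (p : ℕ) (t : Fin m → ℝ) (h0 : ∀ j, 0 ≤ t j) (h1 : ∀ j, t j ≤ 1)
    (hsum : ∑ j, t j = (p : ℝ)) :
    ∃ I : Finset (Fin m), I.card = p ∧ (∀ j, t j = 1 → j ∈ I) ∧ ∀ j, t j = 0 → j ∉ I := by
  classical
  set O : Finset (Fin m) := univ.filter (fun j => t j = 1) with hO
  set Fr : Finset (Fin m) := univ.filter (fun j => t j ≠ 0 ∧ t j ≠ 1) with hFr
  have hdisj : Disjoint O Fr := by
    rw [Finset.disjoint_left]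
    intro a ha hb
    simp [hO, hFr] at ha hb
    exact hb.2 ha
  have hsum2 : ∑ j ∈ O ∪ Fr, t j = (p : ℝ) := by
    rw [← hsum]
    apply Finset.sum_subset (Finset.subset_univ _)
    intro x _ hx
    simp only [hO, hFr, Finset.mem_union, Finset.mem_filter, Finset.mem_univ, true_and,
      not_or, not_and_or, not_not] at hx
    rcases hx.2 with h | h
    · exact h
    · exact absurd h hx.1
  have hOsum : ∑ j ∈ O, t j = (O.card : ℝ) := by
    rw [Finset.sum_congr rfl (fun j hj => by simpa [hO] using (Finset.mem_filter.mp hj).2)]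
    simp
  have hsplit : (O.card : ℝ) + ∑ j ∈ Fr, t j = (p : ℝ) := by
    rw [← hOsum, ← Finset.sum_union hdisj]
    exact hsum2
  have hFrnn : (0:ℝ) ≤ ∑ j ∈ Fr, t j := Finset.sum_nonneg fun j _ => h0 j
  have hFrle : ∑ j ∈ Fr, t j ≤ (Fr.card : ℝ) := by
    calc ∑ j ∈ Fr, t j ≤ ∑ j ∈ Fr, (1:ℝ) := Finset.sum_le_sum fun j _ => h1 j
      _ = (Fr.card : ℝ) := by simp
  have hOp : O.card ≤ p := by exact_mod_cast (by linarith : (O.card : ℝ) ≤ (p:ℝ))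
  have hq : p - O.card ≤ Fr.card := by
    have : ((p - O.card : ℕ) : ℝ) ≤ (Fr.card : ℝ) := by
      rw [Nat.cast_sub hOp]; linarith
    exact_mod_cast this
  obtain ⟨S, hS_sub, hS_card⟩ := Finset.exists_subset_card_eq hq
  have hdisj2 : Disjoint O S := hdisj.mono_right hS_sub
  refine ⟨O ∪ S, ?_, ?_, ?_⟩
  · rw [Finset.card_union_of_disjoint hdisj2, hS_card]
    omega
  · intro j hj
    exact Finset.mem_union_left _ (by simp [hO, hj])
  · intro j hj
    rw [Finset.mem_union]
    rintro (h | h)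
    · simp [hO] at h; rw [hj] at h; norm_num at h
    · have := hS_sub h
      simp [hFr] at this
      exact this.1 hj


lemma prefix_bound (v : Fin n → Fin m → V) (hbd : ∀ i j, ‖v i j‖ ≤ 1)
    (K : ℕ) (t : Fin n → Fin m → ℝ)
    (ha : ∀ (i : Fin n) (j : Fin m), (i : ℕ) < K → 0 ≤ t i j ∧ t i j ≤ 1)
    (hc : ∑ i ∈ univ.filter (fun i : Fin n => (i : ℕ) < K), ∑ j, t i j • v i j
        = ((p : ℝ)/m) • ∑ i ∈ univ.filter (fun i : Fin n => (i : ℕ) < K), ∑ j, v i j)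
    (hd : (frk K t).card ≤ 2 * Module.finrank ℝ V)
    (I : Fin n → Finset (Fin m))
    (hagree : ∀ (i : Fin n) (j : Fin m), (i : ℕ) < K → (t i j = 1 → j ∈ I i) ∧ (t i j = 0 → j ∉ I i))
    (k' : Fin n) (hk' : (k' : ℕ) + 1 = K) :
    ‖(∑ i ∈ Iic k', ∑ j ∈ I i, v i j) - ((p : ℝ)/m) • ∑ i ∈ Iic k', ∑ j, v i j‖
      ≤ 2 * (Module.finrank ℝ V : ℝ) := by
  classical
  have hs : Iic k' = univ.filter (fun i : Fin n => (i : ℕ) < K) := by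
    ext i
    simp only [mem_Iic, mem_filter, mem_univ, true_and, Fin.le_def]
    omega
  set c : Fin n → Fin m → ℝ := fun i j => (if j ∈ I i then (1:ℝ) else 0) - t i j with hcdef
  have hinner : ∀ i, ∑ j, c i j • v i j
      = (∑ j ∈ I i, v i j) - ∑ j, t i j • v i j := by
    intro i
    have h1 : ∑ j, c i j • v i j
        = ∑ j, ((if j ∈ I i then v i j else 0) - t i j • v i j) := by
      refine Finset.sum_congr rfl fun j _ => ?_
      simp only [hcdef, sub_smul, ite_smul, one_smul, zero_smul]
    rw [h1, Finset.sum_sub_distrib]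
    congr 1
    simp [Finset.sum_ite_mem]
  have key : (∑ i ∈ Iic k', ∑ j ∈ I i, v i j) - ((p : ℝ)/m) • ∑ i ∈ Iic k', ∑ j, v i j
      = ∑ i ∈ Iic k', ∑ j, c i j • v i j := by
    rw [hs, ← hc, ← Finset.sum_sub_distrib]
    exact (Finset.sum_congr rfl fun i _ => (hinner i)).symm
  rw [key]
  have step1 : ‖∑ i ∈ Iic k', ∑ j, c i j • v i j‖
      ≤ ∑ i ∈ Iic k', ∑ j, ‖c i j • v i j‖ :=
    (norm_sum_le _ _).trans (Finset.sum_le_sum fun i _ => norm_sum_le _ _)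
  have step2 : ∑ i ∈ Iic k', ∑ j, ‖c i j • v i j‖
      ≤ ∑ i ∈ Iic k', ∑ j, (if (i, j) ∈ frk K t then (1:ℝ) else 0) := by
    refine Finset.sum_le_sum fun i hi => Finset.sum_le_sum fun j _ => ?_
    have hiK : (i : ℕ) < K := by
      rw [hs] at hi
      simpa using hi
    by_cases hf : (i, j) ∈ frk K t
    · simp only [hf, if_true]
      have h01 := ha i j hiK
      have habs : |c i j| ≤ 1 := by
        rw [abs_le]
        constructor <;> by_cases hj : j ∈ I i <;>
          simp only [hcdef, hj, if_true, if_false] <;> linarith [h01.1, h01.2]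
      calc ‖c i j • v i j‖ = |c i j| * ‖v i j‖ := by rw [norm_smul, Real.norm_eq_abs]
        _ ≤ 1 * 1 := mul_le_mul habs (hbd i j) (norm_nonneg _) zero_le_one
        _ = 1 := one_mul 1
    · simp only [hf, if_false]
      have h01 : t i j = 0 ∨ t i j = 1 := by
        rw [mem_frk] at hf
        push_neg at hf
        rcases eq_or_ne (t i j) 0 with h | h
        · exact Or.inl h
        · exact Or.inr (hf hiK h)
      have hc0 : c i j = 0 := by
        rcases h01 with h | h
        · simp [hcdef, h, (hagree i j hiK).2 h]
        · simp [hcdef, h, (hagree i j hiK).1 h]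
      simp [hc0]
  have step3 : ∑ i ∈ Iic k', ∑ j, (if (i, j) ∈ frk K t then (1:ℝ) else 0)
      ≤ ((frk K t).card : ℝ) := by
    have e1 : ∑ i ∈ Iic k', ∑ j, (if (i, j) ∈ frk K t then (1:ℝ) else 0)
        = ∑ q ∈ (Iic k') ×ˢ (univ : Finset (Fin m)), (if q ∈ frk K t then (1:ℝ) else 0) := by
      rw [Finset.sum_product]
    rw [e1, Finset.sum_boole]
    have : ((Iic k') ×ˢ (univ : Finset (Fin m))).filter (fun q => q ∈ frk K t) ⊆ frk K t :=
      fun q hq => (Finset.mem_filter.mp hq).2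
    exact_mod_cast Nat.cast_le.mpr (Finset.card_le_card this)
  have : ((frk K t).card : ℝ) ≤ 2 * (Module.finrank ℝ V : ℝ) := by exact_mod_cast hd
  linarith


lemma reduce (v : Fin n → Fin m → V) (K : ℕ) :
    ∀ (c : ℕ) (t : Fin n → Fin m → ℝ),
    (∀ (i : Fin n) (j : Fin m), (i : ℕ) < K → 0 ≤ t i j ∧ t i j ≤ 1) →
    (∀ i : Fin n, (i : ℕ) < K → ∑ j, t i j = (p : ℝ)) →
    (∑ i ∈ univ.filter (fun i : Fin n => (i : ℕ) < K), ∑ j, t i j • v i j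
        = ((p : ℝ)/m) • ∑ i ∈ univ.filter (fun i : Fin n => (i : ℕ) < K), ∑ j, v i j) →
    (frk K t).card ≤ c →
    ∃ t' : Fin n → Fin m → ℝ,
      (∀ (i : Fin n) (j : Fin m), (i : ℕ) < K → 0 ≤ t' i j ∧ t' i j ≤ 1) ∧
      (∀ i : Fin n, (i : ℕ) < K → ∑ j, t' i j = (p : ℝ)) ∧
      (∑ i ∈ univ.filter (fun i : Fin n => (i : ℕ) < K), ∑ j, t' i j • v i j
        = ((p : ℝ)/m) • ∑ i ∈ univ.filter (fun i : Fin n => (i : ℕ) < K), ∑ j, v i j) ∧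
      (frk K t').card ≤ 2 * Module.finrank ℝ V ∧
      (∀ (i : Fin n) (j : Fin m), (i, j) ∉ frk K t → t' i j = t i j) := by
  classical
  intro c
  induction c with
  | zero =>
    intro t ha hb hc hcard
    exact ⟨t, ha, hb, hc, by omega, fun _ _ _ => rfl⟩
  | succ c ih =>
    intro t ha hb hc hcard
    by_cases hle : (frk K t).card ≤ 2 * Module.finrank ℝ V
    · exact ⟨t, ha, hb, hc, hle, fun _ _ _ => rfl⟩
    push_neg at hle
    set F := frk K t with hF
    set R := F.image Prod.fst with hRdef
    have hmemF : ∀ {q : Fin n × Fin m}, q ∈ F ↔ (q.1 : ℕ) < K ∧ t q.1 q.2 ≠ 0 ∧ t q.1 q.2 ≠ 1 :=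
      fun {q} => mem_frk
    -- each fractional row has at least two fractional entries
    have h2 : ∀ i ∈ R, 2 ≤ (F.filter (fun q => q.1 = i)).card := by
      intro i hiR
      obtain ⟨q0, hq0F, hq0i⟩ := Finset.mem_image.mp hiR
      by_contra hlt
      push_neg at hlt
      have hq0mem : q0 ∈ F.filter (fun q => q.1 = i) := Finset.mem_filter.mpr ⟨hq0F, hq0i⟩
      have hcard1 : (F.filter (fun q => q.1 = i)).card = 1 := by
        have h1 : 1 ≤ (F.filter (fun q => q.1 = i)).card :=
          Finset.card_pos.mpr ⟨q0, hq0mem⟩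
        omega
      obtain ⟨a, haeq⟩ := Finset.card_eq_one.mp hcard1
      have hq0a : q0 = a := by
        have := hq0mem
        rw [haeq] at this
        simpa using this
      have hiK : (i : ℕ) < K := hq0i ▸ (hmemF.mp hq0F).1
      have hfrac0 : t i q0.2 ≠ 0 ∧ t i q0.2 ≠ 1 := by
        have := (hmemF.mp hq0F).2
        rwa [hq0i] at this
      have hotherInt : ∀ j : Fin m, j ≠ q0.2 → t i j = 0 ∨ t i j = 1 := by
        intro j hj
        by_contra hcon
        push_neg at hcon
        have hmem : ((i, j) : Fin n × Fin m) ∈ F.filter (fun q => q.1 = i) :=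
          Finset.mem_filter.mpr ⟨hmemF.mpr ⟨hiK, hcon.1, hcon.2⟩, rfl⟩
        rw [haeq] at hmem
        simp only [Finset.mem_singleton] at hmem
        rw [← hq0a] at hmem
        exact hj (by rw [← hmem])
      -- row sum computation
      set E : Finset (Fin m) := univ.erase q0.2 with hE
      have hrowsum : t i q0.2 + ∑ j ∈ E, t i j = (p : ℝ) := by
        rw [← hb i hiK, hE, Finset.add_sum_erase _ _ (Finset.mem_univ _)]
      set c1 := (E.filter (fun j => t i j = 1)).card with hc1
      have hEsum : ∑ j ∈ E, t i j = (c1 : ℝ) := by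
        rw [← Finset.sum_filter_add_sum_filter_not E (fun j => t i j = 1)]
        have e1 : ∑ j ∈ E.filter (fun j => t i j = 1), t i j = (c1 : ℝ) := by
          rw [Finset.sum_congr rfl (fun j hj => (Finset.mem_filter.mp hj).2)]
          simp [hc1]
        have e2 : ∑ j ∈ E.filter (fun j => ¬ t i j = 1), t i j = 0 := by
          apply Finset.sum_eq_zero
          intro j hj
          have hj1 := Finset.mem_filter.mp hj
          have hjne : j ≠ q0.2 := Finset.ne_of_mem_erase hj1.1
          rcases hotherInt j hjne with h | h
          · exact h
          · exact absurd h hj1.2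
        rw [e1, e2, add_zero]
      have hlb : 0 < t i q0.2 := lt_of_le_of_ne (ha i q0.2 hiK).1 (Ne.symm hfrac0.1)
      have hub : t i q0.2 < 1 := lt_of_le_of_ne (ha i q0.2 hiK).2 hfrac0.2
      have hc1p : (c1 : ℝ) < p := by rw [hEsum] at hrowsum; linarith
      have hpc1 : (p : ℝ) < c1 + 1 := by rw [hEsum] at hrowsum; linarith
      have h1 : c1 < p := by exact_mod_cast hc1p
      have h2 : p < c1 + 1 := by exact_mod_cast hpc1
      omega
    have hcard_eq : F.card = ∑ i ∈ R, (F.filter (fun q => q.1 = i)).card :=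
      Finset.card_eq_sum_card_fiberwise (fun q hq => Finset.mem_image_of_mem Prod.fst hq)
    have h2R : 2 * R.card ≤ F.card := by
      rw [hcard_eq]
      calc 2 * R.card = ∑ _i ∈ R, 2 := by rw [Finset.sum_const, smul_eq_mul, mul_comm]
        _ ≤ ∑ i ∈ R, (F.filter (fun q => q.1 = i)).card := Finset.sum_le_sum h2
    have hdim : R.card + Module.finrank ℝ V < F.card := by omega
    -- linear dependence
    set w : {q // q ∈ F} → ({i // i ∈ R} → ℝ) × V :=
      fun q => (fun i => if q.1.1 = i.1 then (1:ℝ) else 0, v q.1.1 q.1.2) with hw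
    have hfinW : Module.finrank ℝ (({i // i ∈ R} → ℝ) × V) = R.card + Module.finrank ℝ V := by
      rw [Module.finrank_prod, Module.finrank_pi, Fintype.card_coe]
    have hni : ¬ LinearIndependent ℝ w := by
      intro hLI
      have := hLI.fintype_card_le_finrank
      rw [hfinW, Fintype.card_coe] at this
      omega
    obtain ⟨g, hg0, q0, hgq0⟩ := Fintype.not_linearIndependent_iff.mp hni
    have hrow : ∀ i : {i // i ∈ R},
        ∑ q : {q // q ∈ F}, g q * (if q.1.1 = i.1 then (1:ℝ) else 0) = 0 := by
      intro i
      have h1 := congrArg Prod.fst hg0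
      rw [Prod.fst_sum] at h1
      have h2 := congrFun h1 i
      simpa [hw, Prod.smul_fst, Finset.sum_apply, smul_eq_mul] using h2
    have hvec : ∑ q : {q // q ∈ F}, g q • v q.1.1 q.1.2 = 0 := by
      have h1 := congrArg Prod.snd hg0
      rw [Prod.snd_sum] at h1
      simpa [hw, Prod.smul_snd] using h1
    -- extend g to all entries
    set G : Fin n × Fin m → ℝ := fun x => if h : x ∈ F then g ⟨x, h⟩ else 0 with hG
    have hGsupp : ∀ x : Fin n × Fin m, x ∉ F → G x = 0 := by
      intro x hx; simp [hG, hx]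
    have hGatt : ∀ q : {q // q ∈ F}, G q.1 = g q := by
      intro q; simp [hG, q.2]
    have hGrow : ∀ i : Fin n, ∑ j, G (i, j) = 0 := by
      intro i
      have e1 : ∑ j, G (i, j) = ∑ x : Fin n × Fin m, (if x.1 = i then G x else 0) := by
        rw [Fintype.sum_prod_type]
        have h1 : ∀ i' : Fin n, (∑ j, if (i', j).1 = i then G (i', j) else 0)
            = if i' = i then ∑ j, G (i', j) else 0 := by
          intro i'
          by_cases h : i' = i <;> simp [h]
        rw [Finset.sum_congr rfl fun i' _ => h1 i']
        simp
      have e2 : ∑ x : Fin n × Fin m, (if x.1 = i then G x else 0)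
          = ∑ x ∈ F, (if x.1 = i then G x else 0) := by
        symm
        apply Finset.sum_subset (Finset.subset_univ _)
        intro x _ hx
        simp [hGsupp x hx]
      have e3 : ∑ x ∈ F, (if x.1 = i then G x else 0)
          = ∑ q ∈ F.attach, (if q.1.1 = i then G q.1 else 0) :=
        (Finset.sum_attach F _).symm
      rw [e1, e2, e3]
      by_cases hiR : i ∈ R
      · have h4 : ∑ q ∈ F.attach, (if q.1.1 = i then G q.1 else 0)
            = ∑ q : {q // q ∈ F}, g q * (if q.1.1 = (⟨i, hiR⟩ : {i // i ∈ R}).1 then (1:ℝ) else 0) := by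
          rw [Finset.univ_eq_attach]
          exact Finset.sum_congr rfl fun q _ => by simp [hGatt q, mul_ite]
        rw [h4, hrow ⟨i, hiR⟩]
      · apply Finset.sum_eq_zero
        intro q _
        have hne : ¬ q.1.1 = i := by
          intro h
          exact hiR (h ▸ Finset.mem_image_of_mem Prod.fst q.2)
        simp [hne]
    have hGvec : ∑ i : Fin n, ∑ j, G (i, j) • v i j = 0 := by
      have e1 : ∑ i : Fin n, ∑ j, G (i, j) • v i j
          = ∑ x : Fin n × Fin m, G x • v x.1 x.2 := by rw [Fintype.sum_prod_type]
      have e2 : ∑ x : Fin n × Fin m, G x • v x.1 x.2 = ∑ x ∈ F, G x • v x.1 x.2 := by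
        symm
        apply Finset.sum_subset (Finset.subset_univ _)
        intro x _ hx
        simp [hGsupp x hx]
      have e3 : ∑ x ∈ F, G x • v x.1 x.2
          = ∑ q ∈ F.attach, G q.1 • v q.1.1 q.1.2 := (Finset.sum_attach F _).symm
      rw [e1, e2, e3, ← hvec, Finset.univ_eq_attach]
      exact Finset.sum_congr rfl fun q _ => by rw [hGatt q]
    -- choose step size
    have hq0F := q0.2
    set D : Finset {q // q ∈ F} := univ.filter (fun q => g q ≠ 0) with hD
    have hDne : D.Nonempty := ⟨q0, by simp [hD, hgq0]⟩
    set step : {q // q ∈ F} → ℝ :=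
      fun q => if 0 < g q then (1 - t q.1.1 q.1.2) / g q else t q.1.1 q.1.2 / (-g q) with hstep
    have hfr : ∀ q : {q // q ∈ F}, 0 < t q.1.1 q.1.2 ∧ t q.1.1 q.1.2 < 1 := by
      intro q
      have h1 := hmemF.mp q.2
      have h2 := ha q.1.1 q.1.2 h1.1
      exact ⟨lt_of_le_of_ne h2.1 (Ne.symm h1.2.1), lt_of_le_of_ne h2.2 h1.2.2⟩
    have hstep_pos : ∀ q ∈ D, 0 < step q := by
      intro q hq
      have hgne : g q ≠ 0 := by simpa [hD] using hq
      rcases lt_or_gt_of_ne hgne with h | h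
      · rw [hstep]
        simp only [not_lt.mpr h.le, if_neg (not_lt.mpr h.le)]
        exact div_pos (hfr q).1 (by linarith)
      · rw [hstep]
        simp only [if_pos h]
        exact div_pos (by linarith [(hfr q).2]) h
    obtain ⟨q1, hq1D, hq1min⟩ := Finset.exists_min_image D step hDne
    have hgq1 : g q1 ≠ 0 := by simpa [hD] using hq1D
    set s : ℝ := step q1 with hs
    have hspos : 0 < s := hstep_pos q1 hq1D
    -- the moved point
    set t2 : Fin n → Fin m → ℝ := fun i j => t i j + s * G (i, j) with ht2
    have hchange : ∀ (i : Fin n) (j : Fin m), (i, j) ∉ F → t2 i j = t i j := by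
      intro i j hij
      rw [ht2]
      simp [hGsupp _ hij]
    have h01 : ∀ q : Fin n × Fin m, q ∈ F → 0 ≤ t2 q.1 q.2 ∧ t2 q.1 q.2 ≤ 1 := by
      rintro ⟨i, j⟩ hq
      set qq : {q // q ∈ F} := ⟨(i, j), hq⟩ with hqq
      have hGq : G (i, j) = g qq := hGatt qq
      have hval : t2 i j = t i j + s * g qq := by simp only [ht2]; rw [hGq]
      have hfr' := hfr qq
      have htj0 : 0 < t i j := hfr'.1
      have htj1 : t i j < 1 := hfr'.2
      by_cases hg : g qq = 0
      · rw [hval, hg, mul_zero, add_zero]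
        exact ⟨htj0.le, htj1.le⟩
      · have hqD : qq ∈ D := by simp [hD, hg]
        have hsle : s ≤ step qq := hq1min qq hqD
        rcases lt_or_gt_of_ne hg with hneg | hpos
        · -- g < 0
          have hstepv : step qq = t i j / (-g qq) := by
            rw [hstep]; simp [not_lt.mpr hneg.le]; rfl
          have h2 : step qq * g qq = - t i j := by
            rw [hstepv, div_mul_eq_mul_div, div_neg, mul_div_assoc, div_self hg, mul_one]
          have h1 : step qq * g qq ≤ s * g qq :=
            mul_le_mul_of_nonpos_right hsle hneg.le
          have h3 : s * g qq ≤ 0 := mul_nonpos_of_nonneg_of_nonpos hspos.le hneg.le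
          rw [hval]
          constructor <;> linarith
        · -- g > 0
          have hstepv : step qq = (1 - t i j) / g qq := by
            rw [hstep]; simp [hpos]; rfl
          have h2 : step qq * g qq = 1 - t i j := by
            rw [hstepv, div_mul_eq_mul_div, mul_div_assoc, div_self hg, mul_one]
          have h1 : s * g qq ≤ step qq * g qq :=
            mul_le_mul_of_nonneg_right hsle hpos.le
          have h3 : 0 ≤ s * g qq := mul_nonneg hspos.le hpos.le
          rw [hval]
          constructor <;> linarith
    have hq1int : t2 q1.1.1 q1.1.2 = 0 ∨ t2 q1.1.1 q1.1.2 = 1 := by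
      have hGq : G (q1.1.1, q1.1.2) = g q1 := by
        have : (q1.1.1, q1.1.2) = q1.1 := rfl
        rw [this]; exact hGatt q1
      have hval : t2 q1.1.1 q1.1.2 = t q1.1.1 q1.1.2 + s * g q1 := by simp only [ht2]; rw [hGq]
      rcases lt_or_gt_of_ne hgq1 with hneg | hpos
      · left
        have hstepv : s = t q1.1.1 q1.1.2 / (-g q1) := by
          rw [hs, hstep]; simp [not_lt.mpr hneg.le]
        have h2 : s * g q1 = - t q1.1.1 q1.1.2 := by
          rw [hstepv, div_mul_eq_mul_div, div_neg, mul_div_assoc, div_self hgq1, mul_one]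
        rw [hval, h2]; ring
      · right
        have hstepv : s = (1 - t q1.1.1 q1.1.2) / g q1 := by
          rw [hs, hstep]; simp [hpos]
        have h2 : s * g q1 = 1 - t q1.1.1 q1.1.2 := by
          rw [hstepv, div_mul_eq_mul_div, mul_div_assoc, div_self hgq1, mul_one]
        rw [hval, h2]; ring
    -- invariants for t2
    have ha2 : ∀ (i : Fin n) (j : Fin m), (i : ℕ) < K → 0 ≤ t2 i j ∧ t2 i j ≤ 1 := by
      intro i j hi
      by_cases hq : (i, j) ∈ F
      · exact h01 (i, j) hq
      · rw [hchange i j hq]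
        exact ha i j hi
    have hb2 : ∀ i : Fin n, (i : ℕ) < K → ∑ j, t2 i j = (p : ℝ) := by
      intro i hi
      rw [ht2]
      simp only
      rw [Finset.sum_add_distrib, ← Finset.mul_sum, hGrow i, mul_zero, add_zero]
      exact hb i hi
    have hGvecK : ∑ i ∈ univ.filter (fun i : Fin n => (i : ℕ) < K), ∑ j, G (i, j) • v i j = 0 := by
      rw [← hGvec]
      apply Finset.sum_subset (Finset.filter_subset _ _)
      intro i _ hi
      simp only [Finset.mem_filter, Finset.mem_univ, true_and] at hi
      apply Finset.sum_eq_zero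
      intro j _
      have : G (i, j) = 0 := by
        by_cases h : (i, j) ∈ F
        · exact absurd (hmemF.mp h).1 hi
        · exact hGsupp _ h
      simp [this]
    have hc2 : ∑ i ∈ univ.filter (fun i : Fin n => (i : ℕ) < K), ∑ j, t2 i j • v i j
        = ((p : ℝ)/m) • ∑ i ∈ univ.filter (fun i : Fin n => (i : ℕ) < K), ∑ j, v i j := by
      have e0 : ∀ (i : Fin n) (j : Fin m), t2 i j • v i j
          = t i j • v i j + s • (G (i, j) • v i j) := by
        intro i j
        rw [ht2]
        simp only
        rw [add_smul, smul_smul]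
      calc ∑ i ∈ univ.filter (fun i : Fin n => (i : ℕ) < K), ∑ j, t2 i j • v i j
          = ∑ i ∈ univ.filter (fun i : Fin n => (i : ℕ) < K),
              (∑ j, t i j • v i j + ∑ j, s • (G (i, j) • v i j)) := by
            refine Finset.sum_congr rfl fun i _ => ?_
            rw [← Finset.sum_add_distrib]
            exact Finset.sum_congr rfl fun j _ => e0 i j
        _ = ∑ i ∈ univ.filter (fun i : Fin n => (i : ℕ) < K), ∑ j, t i j • v i j
            + s • ∑ i ∈ univ.filter (fun i : Fin n => (i : ℕ) < K), ∑ j, G (i, j) • v i j := by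
            rw [Finset.sum_add_distrib, Finset.smul_sum]
            congr 1
            exact Finset.sum_congr rfl fun i _ => (Finset.smul_sum).symm
        _ = ((p : ℝ)/m) • ∑ i ∈ univ.filter (fun i : Fin n => (i : ℕ) < K), ∑ j, v i j := by
            rw [hGvecK, smul_zero, add_zero, hc]
    -- fractional set strictly decreases
    have hsub : frk K t2 ⊆ F.erase q1.1 := by
      intro q hq
      rw [mem_frk] at hq
      have hqF : q ∈ F := by
        by_contra hqF
        have heq : t2 q.1 q.2 = t q.1 q.2 := hchange q.1 q.2 hqF
        have hnot : ¬ ((q.1 : ℕ) < K ∧ t q.1 q.2 ≠ 0 ∧ t q.1 q.2 ≠ 1) :=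
          fun h => hqF (hmemF.mpr h)
        push_neg at hnot
        rcases eq_or_ne (t q.1 q.2) 0 with h | h
        · exact hq.2.1 (heq.trans h)
        · exact hq.2.2 (heq.trans (hnot hq.1 h))
      apply Finset.mem_erase.mpr
      refine ⟨?_, hqF⟩
      intro hqq1
      have : t2 q.1 q.2 = t2 q1.1.1 q1.1.2 := by rw [hqq1]
      rcases hq1int with h | h
      · exact hq.2.1 (this.trans h)
      · exact hq.2.2 (this.trans h)
    have hcard2 : (frk K t2).card ≤ c := by
      have h1 : (frk K t2).card ≤ (F.erase q1.1).card := Finset.card_le_card hsub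
      have h2 : (F.erase q1.1).card = F.card - 1 := Finset.card_erase_of_mem q1.2
      omega
    obtain ⟨t', ha', hb', hc', hd', hpres'⟩ := ih t2 ha2 hb2 hc2 hcard2
    refine ⟨t', ha', hb', hc', hd', ?_⟩
    intro i j hij
    have hijF : (i, j) ∉ F := hij
    have h1 : t' i j = t2 i j := by
      apply hpres'
      intro hmem
      exact hijF (Finset.mem_of_mem_erase (hsub hmem))
    rw [h1, hchange i j hijF]

lemma main_ind (v : Fin n → Fin m → V) (hbd : ∀ i j, ‖v i j‖ ≤ 1)
    (hp1 : 1 ≤ p) (hpm : p ≤ m) :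
    ∀ (N K : ℕ), K + N = n → ∀ t : Fin n → Fin m → ℝ,
    (∀ (i : Fin n) (j : Fin m), (i : ℕ) < K → 0 ≤ t i j ∧ t i j ≤ 1) →
    (∀ i : Fin n, (i : ℕ) < K → ∑ j, t i j = (p : ℝ)) →
    (∑ i ∈ univ.filter (fun i : Fin n => (i : ℕ) < K), ∑ j, t i j • v i j
        = ((p : ℝ)/m) • ∑ i ∈ univ.filter (fun i : Fin n => (i : ℕ) < K), ∑ j, v i j) →
    (frk K t).card ≤ 2 * Module.finrank ℝ V →
    ∃ I : Fin n → Finset (Fin m),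
      (∀ i, (I i).card = p) ∧
      (∀ (i : Fin n) (j : Fin m), (i : ℕ) < K → (t i j = 1 → j ∈ I i) ∧ (t i j = 0 → j ∉ I i)) ∧
      (∀ k' : Fin n, K ≤ (k' : ℕ) + 1 →
        ‖(∑ i ∈ Iic k', ∑ j ∈ I i, v i j) - ((p : ℝ)/m) • ∑ i ∈ Iic k', ∑ j, v i j‖
          ≤ 2 * (Module.finrank ℝ V : ℝ)) := by
  classical
  intro N
  induction N with
  | zero =>
    intro K hK t ha hb hc hd
    have hKn : K = n := by omega
    subst hKn
    have hround : ∀ i, ∃ I : Finset (Fin m),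
        I.card = p ∧ (∀ j, t i j = 1 → j ∈ I) ∧ ∀ j, t i j = 0 → j ∉ I := fun i =>
      exists_round p (t i) (fun j => (ha i j i.isLt).1) (fun j => (ha i j i.isLt).2)
        (hb i i.isLt)
    choose I hI1 hI2 hI3 using hround
    refine ⟨I, hI1, fun i j _ => ⟨hI2 i j, hI3 i j⟩, ?_⟩
    intro k' hk'
    have hlt := k'.isLt
    exact prefix_bound v hbd K t ha hc hd I (fun i j _ => ⟨hI2 i j, hI3 i j⟩) k' (by omega)
  | succ N ih =>
    intro K hK t ha hb hc hd
    have hKn : K < n := by omega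
    have hm0 : (0:ℝ) < m := by
      have : 1 ≤ m := le_trans hp1 hpm
      exact_mod_cast Nat.lt_of_lt_of_le Nat.zero_lt_one this
    set κ : Fin n := ⟨K, hKn⟩ with hκ
    set t1 : Fin n → Fin m → ℝ := Function.update t κ (fun _ => (p : ℝ)/m) with ht1
    have hne : ∀ i : Fin n, (i : ℕ) < K → i ≠ κ := by
      intro i hi h
      rw [h, hκ] at hi
      exact absurd hi (by simp)
    have ht1row : ∀ j, t1 κ j = (p : ℝ)/m := by
      intro j; rw [ht1, Function.update_self]
    have ht1other : ∀ i : Fin n, i ≠ κ → ∀ j, t1 i j = t i j := by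
      intro i hi j; rw [ht1, Function.update_of_ne hi]
    have ha1 : ∀ (i : Fin n) (j : Fin m), (i : ℕ) < K + 1 → 0 ≤ t1 i j ∧ t1 i j ≤ 1 := by
      intro i j hi
      by_cases hik : i = κ
      · subst hik
        rw [ht1row]
        constructor
        · positivity
        · rw [div_le_one hm0]
          exact_mod_cast hpm
      · rw [ht1other i hik]
        apply ha
        have : (i : ℕ) ≠ K := by
          intro h
          exact hik (Fin.ext h)
        omega
    have hb1 : ∀ i : Fin n, (i : ℕ) < K + 1 → ∑ j, t1 i j = (p : ℝ) := by
      intro i hi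
      by_cases hik : i = κ
      · subst hik
        rw [Finset.sum_congr rfl (fun j _ => ht1row j)]
        rw [Finset.sum_const, Finset.card_univ, Fintype.card_fin, nsmul_eq_mul]
        field_simp
      · rw [Finset.sum_congr rfl (fun j _ => ht1other i hik j)]
        apply hb
        have : (i : ℕ) ≠ K := fun h => hik (Fin.ext h)
        omega
    have hfil : univ.filter (fun i : Fin n => (i : ℕ) < K + 1)
        = insert κ (univ.filter (fun i : Fin n => (i : ℕ) < K)) := by
      ext i
      simp only [Finset.mem_filter, Finset.mem_univ, true_and, Finset.mem_insert]
      constructor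
      · intro h
        by_cases hik : (i : ℕ) = K
        · exact Or.inl (Fin.ext hik)
        · exact Or.inr (by omega)
      · rintro (h | h)
        · rw [h]; simp [hκ]
        · omega
    have hκnot : κ ∉ univ.filter (fun i : Fin n => (i : ℕ) < K) := by
      simp [hκ]
    have hc1 : ∑ i ∈ univ.filter (fun i : Fin n => (i : ℕ) < K + 1), ∑ j, t1 i j • v i j
        = ((p : ℝ)/m) • ∑ i ∈ univ.filter (fun i : Fin n => (i : ℕ) < K + 1), ∑ j, v i j := by
      rw [hfil, Finset.sum_insert hκnot, Finset.sum_insert hκnot, smul_add]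
      have e1 : ∑ j, t1 κ j • v κ j = ((p : ℝ)/m) • ∑ j, v κ j := by
        rw [Finset.smul_sum]
        exact Finset.sum_congr rfl fun j _ => by rw [ht1row]
      have e2 : ∑ i ∈ univ.filter (fun i : Fin n => (i : ℕ) < K), ∑ j, t1 i j • v i j
          = ∑ i ∈ univ.filter (fun i : Fin n => (i : ℕ) < K), ∑ j, t i j • v i j := by
        refine Finset.sum_congr rfl fun i hi => ?_
        have hiK : (i : ℕ) < K := by simpa using hi
        exact Finset.sum_congr rfl fun j _ => by rw [ht1other i (hne i hiK)]
      rw [e1, e2, hc]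
    obtain ⟨t2, ha2, hb2, hc2, hd2, hpres⟩ :=
      reduce v (K + 1) (frk (K + 1) t1).card t1 ha1 hb1 hc1 le_rfl
    obtain ⟨I, hI1, hI2, hI3⟩ := ih (K + 1) (by omega) t2 ha2 hb2 hc2 hd2
    have hagreeK : ∀ (i : Fin n) (j : Fin m), (i : ℕ) < K →
        (t i j = 1 → j ∈ I i) ∧ (t i j = 0 → j ∉ I i) := by
      intro i j hi
      have hiκ := hne i hi
      have ht1ij : t1 i j = t i j := ht1other i hiκ j
      constructor
      · intro h1
        have h1' : t1 i j = 1 := ht1ij.trans h1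
        have hnotfrk : (i, j) ∉ frk (K + 1) t1 := by
          rw [mem_frk]
          push_neg
          intro _ _
          exact h1'
        have ht2ij : t2 i j = 1 := (hpres i j hnotfrk).trans h1'
        exact (hI2 i j (by omega)).1 ht2ij
      · intro h0
        have h0' : t1 i j = 0 := ht1ij.trans h0
        have hnotfrk : (i, j) ∉ frk (K + 1) t1 := by
          rw [mem_frk]
          push_neg
          intro _ h
          exact absurd h0' h
        have ht2ij : t2 i j = 0 := (hpres i j hnotfrk).trans h0'
        exact (hI2 i j (by omega)).2 ht2ij
    refine ⟨I, hI1, hagreeK, ?_⟩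
    intro k' hk'
    by_cases hge : K + 1 ≤ (k' : ℕ) + 1
    · exact hI3 k' hge
    · exact prefix_bound v hbd K t ha hc hd I hagreeK k' (by omega)

end Aux

theorem splitting_lemma (V : Type*) [NormedAddCommGroup V] [NormedSpace ℝ V]
    [FiniteDimensional ℝ V]
    (n m p : ℕ) (hp1 : 1 ≤ p) (hpm : p ≤ m)
    (v : Fin n → Fin m → V)
    (hbd : ∀ i j, ‖v i j‖ ≤ 1)
    (x : Fin n → V)
    (hx : ∀ k : Fin n, x k = (1 / (m : ℝ)) • ∑ i ∈ Finset.Iic k, ∑ j, v i j) :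
    ∃ I : Fin n → Finset (Fin m),
      (∀ k, (I k).card = p) ∧
      ∀ k : Fin n, ‖(∑ i ∈ Finset.Iic k, ∑ j ∈ I i, v i j) - (p : ℝ) • x k‖ ≤
        8 * (Module.finrank ℝ V : ℝ) ^ 2 := by
  classical
  obtain ⟨I, hI1, _, hI3⟩ := main_ind v hbd hp1 hpm n 0 (by omega) (fun _ _ => 0)
    (fun i j h => absurd h (by omega))
    (fun i h => absurd h (by omega))
    (by simp)
    (by simp [frk])
  refine ⟨I, hI1, ?_⟩
  intro k
  have hb := hI3 k (by omega)
  have hxk : (p : ℝ) • x k = ((p : ℝ)/m) • ∑ i ∈ Finset.Iic k, ∑ j, v i j := by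
    rw [hx k, smul_smul, mul_one_div]
  rw [hxk]
  refine le_trans hb ?_
  rcases Nat.eq_zero_or_pos (Module.finrank ℝ V) with h | h
  · simp [h]
  · have h1 : (1:ℝ) ≤ (Module.finrank ℝ V : ℝ) := by exact_mod_cast h
    nlinarith
end

section
/- Let $V$ be a $d$-dimensional real normed space, let $v_{i,j}\in V$ ($1\le i\le n$, $1\le j\le m$) satisfy $\|v_{i,j}\|\le 1$, and set $x_k=\frac{1}{m}\sum_{i=1}^k\sum_{j=1}^m v_{i,j}$. Then there exist permutations $\pi_1,\dots,\pi_n$ of $\{1,\dots,m\}$ such that $\|\sum_{i=1}^k v_{i,\pi_i(j)} - x_k\| \le \frac{8d^2}{\log 1.5}$ for all $k=1,\dots,n$ and $j=1,\dots,m$. -/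
open Finset

namespace MKwap
variable {V : Type*} [NormedAddCommGroup V] [NormedSpace ℝ V] [FiniteDimensional ℝ V]

/-- nonzero kernel vector supported on `F`, with zero row-sums and zero `u`-weighted sum. -/
lemma exists_kernel {n M : ℕ} (u : Fin n × Fin M → V) (F : Finset (Fin n × Fin M))
    (hF : 2 * Module.finrank ℝ V < F.card)
    (hrows : ∀ i : Fin n, ∀ c ∈ F, c.1 = i →
      2 ≤ (F.filter (fun c' => c'.1 = i)).card) :
    ∃ v : Fin n × Fin M → ℝ, (∀ c, c ∉ F → v c = 0) ∧ (∃ c, v c ≠ 0) ∧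
      (∀ i : Fin n, ∑ j, v (i, j) = 0) ∧ (∑ c, v c • u c = 0) := by
  classical
  set d := Module.finrank ℝ V with hd
  set R : Finset (Fin n) := F.image Prod.fst with hR
  -- each fiber has ≥ 2 elements, so 2 * |R| ≤ |F|
  have hfiber : ∀ i ∈ R, 2 ≤ (F.filter (fun c' => c'.1 = i)).card := by
    intro i hi
    obtain ⟨c, hc, hci⟩ := Finset.mem_image.mp hi
    exact hrows i c hc hci
  have hcard_R : 2 * R.card ≤ F.card := by
    have h1 : F.card = ∑ i ∈ R, (F.filter (fun c' => c'.1 = i)).card := by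
      rw [Finset.card_eq_sum_card_fiberwise (f := Prod.fst) (t := R)]
      intro c hc; exact Finset.mem_image_of_mem _ hc
    have h2 : ∑ i ∈ R, 2 ≤ ∑ i ∈ R, (F.filter (fun c' => c'.1 = i)).card :=
      Finset.sum_le_sum hfiber
    simpa [h1, Finset.sum_const, two_mul, mul_comm] using h2
  -- the linear map
  let Φrow : (↥F → ℝ) →ₗ[ℝ] (↥R → ℝ) :=
    { toFun := fun v r => ∑ c : ↥F, if (c : Fin n × Fin M).1 = (r : Fin n) then v c else 0
      map_add' := by
        intro v w; funext r
        simp only [Pi.add_apply, ← Finset.sum_add_distrib]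
        congr 1; funext c; split_ifs <;> simp
      map_smul' := by
        intro t v; funext r
        simp only [Pi.smul_apply, RingHom.id_apply, smul_eq_mul, Finset.mul_sum]
        congr 1; funext c; split_ifs <;> simp }
  let Φvec : (↥F → ℝ) →ₗ[ℝ] V :=
    { toFun := fun v => ∑ c : ↥F, v c • u (c : Fin n × Fin M)
      map_add' := by
        intro v w
        simp only [Pi.add_apply, add_smul, Finset.sum_add_distrib]
      map_smul' := by
        intro t v
        simp only [Pi.smul_apply, RingHom.id_apply, smul_eq_mul, Finset.smul_sum, mul_smul] }
  let Φ := Φrow.prod Φvec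
  have hdim : Module.finrank ℝ ((↥R → ℝ) × V) < Module.finrank ℝ (↥F → ℝ) := by
    rw [Module.finrank_prod, Module.finrank_pi, Module.finrank_pi]
    simp only [Fintype.card_coe]
    omega
  have hninj : ¬ Function.Injective Φ := by
    intro hinj
    exact absurd (LinearMap.finrank_le_finrank_of_injective hinj) (not_le.mpr hdim)
  obtain ⟨x, y, hxy, hne⟩ := Function.not_injective_iff.mp hninj
  set v0 : ↥F → ℝ := x - y with hv0
  have hv0ne : v0 ≠ 0 := sub_ne_zero.mpr hne
  have hΦv0 : Φ v0 = 0 := by rw [hv0, map_sub, hxy, sub_self]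
  -- extend by zero
  set v : Fin n × Fin M → ℝ := fun c => if h : c ∈ F then v0 ⟨c, h⟩ else 0 with hv
  have hsupp : ∀ c, c ∉ F → v c = 0 := fun c hc => by simp [hv, hc]
  have hvF : ∀ (c : ↥F), v (c : Fin n × Fin M) = v0 c := by
    intro c; simp [hv, c.2]
  refine ⟨v, hsupp, ?_, ?_, ?_⟩
  · -- nonzero
    obtain ⟨c, hc⟩ : ∃ c : ↥F, v0 c ≠ 0 := by
      by_contra h
      push_neg at h
      exact hv0ne (funext h)
    exact ⟨c, by rw [hvF]; exact hc⟩
  · -- row sums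
    intro i
    have key : ∑ j, v (i, j) = ∑ c ∈ F.filter (fun c' => c'.1 = i), v c := by
      have e1 : ∑ j, v (i, j) = ∑ c ∈ Finset.univ.filter (fun c' : Fin n × Fin M => c'.1 = i), v c := by
        rw [Finset.sum_filter]
        rw [← Finset.univ_product_univ, Finset.sum_product]
        rw [Finset.sum_eq_single i]
        · simp
        · intro b _ hb; simp [hb]
        · intro h; exact absurd (Finset.mem_univ i) h
      rw [e1]
      refine (Finset.sum_subset ?_ ?_).symm
      · intro c hc
        simp only [Finset.mem_filter] at hc ⊢
        exact ⟨Finset.mem_univ _, hc.2⟩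
      · intro c hc hc'
        simp only [Finset.mem_filter] at hc hc'
        exact hsupp c (fun hcf => hc' ⟨hcf, hc.2⟩)
    rw [key]
    by_cases hiR : i ∈ R
    · have := congrFun (congrArg Prod.fst hΦv0) ⟨i, hiR⟩
      simp only [Φ, LinearMap.prod_apply, Pi.prod, Pi.zero_apply] at this
      have h2 : ∑ c : ↥F, (if (c : Fin n × Fin M).1 = i then v0 c else 0) = 0 := this
      calc ∑ c ∈ F.filter (fun c' => c'.1 = i), v c
          = ∑ c ∈ F, (if c.1 = i then v c else 0) := by rw [Finset.sum_filter]
        _ = ∑ c : ↥F, (if (c : Fin n × Fin M).1 = i then v0 c else 0) := by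
            rw [← Finset.sum_coe_sort F (fun c => if c.1 = i then v c else 0)]
            congr 1; funext c; rw [hvF]
        _ = 0 := h2
    · rw [Finset.sum_eq_zero]
      intro c hc
      simp only [Finset.mem_filter] at hc
      exact absurd (hc.2 ▸ Finset.mem_image_of_mem Prod.fst hc.1) hiR
  · -- vector balance
    have := congrArg Prod.snd hΦv0
    simp only [Φ, LinearMap.prod_apply, Pi.prod, Prod.snd_zero] at this
    have h2 : ∑ c : ↥F, v0 c • u (c : Fin n × Fin M) = 0 := this
    calc ∑ c, v c • u c = ∑ c ∈ F, v c • u c := by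
          refine (Finset.sum_subset (Finset.subset_univ F) ?_).symm
          intro c _ hc; rw [hsupp c hc, zero_smul]
      _ = ∑ c : ↥F, v0 c • u (c : Fin n × Fin M) := by
          rw [← Finset.sum_coe_sort F (fun c => v c • u c)]
          congr 1; funext c; rw [hvF]
      _ = 0 := h2

variable {n M a : ℕ}


/-- state invariant -/
def Good (u : Fin n × Fin M → V) (a : ℕ) (k : ℕ) (l : Fin n × Fin M → ℝ) : Prop :=
  (∀ c, 0 ≤ l c ∧ l c ≤ 1) ∧
  (∀ i : Fin n, ∑ j, l (i, j) = (a : ℝ)) ∧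
  (∑ c, (l c - (a : ℝ) / (M : ℝ)) • u c = 0) ∧
  (∀ c : Fin n × Fin M, k ≤ (c.1 : ℕ) → l c = (a : ℝ) / (M : ℝ))

noncomputable def FracK (k : ℕ) (l : Fin n × Fin M → ℝ) : Finset (Fin n × Fin M) :=
  by classical exact Finset.univ.filter (fun c => (l c ≠ 0 ∧ l c ≠ 1) ∧ (c.1 : ℕ) < k)

lemma mem_FracK {k : ℕ} {l : Fin n × Fin M → ℝ} {c : Fin n × Fin M} :
    c ∈ FracK k l ↔ (l c ≠ 0 ∧ l c ≠ 1) ∧ (c.1 : ℕ) < k := by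
  classical
  simp [FracK]

/-- a row with some fractional entry has at least two fractional entries -/
lemma two_frac_in_row {u : Fin n × Fin M → V} {k : ℕ} {l : Fin n × Fin M → ℝ}
    (hG : Good u a k l) (i : Fin n) {j₀ : Fin M}
    (hj₀ : l (i, j₀) ≠ 0 ∧ l (i, j₀) ≠ 1) :
    2 ≤ (Finset.univ.filter (fun j => l (i, j) ≠ 0 ∧ l (i, j) ≠ 1)).card := by
  classical
  set Fi := Finset.univ.filter (fun j => l (i, j) ≠ 0 ∧ l (i, j) ≠ 1) with hFi
  have hne : Fi.Nonempty := ⟨j₀, by simp [hFi, hj₀.1, hj₀.2]⟩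
  rcases Nat.lt_or_ge Fi.card 2 with h | h
  · exfalso
    have hcard1 : Fi.card = 1 := by
      have := Finset.card_pos.mpr hne; omega
    obtain ⟨j₁, hj₁⟩ := Finset.card_eq_one.mp hcard1
    -- sum over the row
    set O := Finset.univ.filter (fun j => l (i, j) = 1) with hO
    have hsum : (a : ℝ) = ∑ j, l (i, j) := (hG.2.1 i).symm
    have hsplit : ∑ j, l (i, j) = l (i, j₁) + O.card := by
      have hdis : Disjoint Fi O := by
        rw [Finset.disjoint_left]
        intro j hj hjO
        rw [hFi, Finset.mem_filter] at hj
        rw [hO, Finset.mem_filter] at hjO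
        exact hj.2.2 hjO.2
      have hsub : Fi ∪ O ⊆ Finset.univ := Finset.subset_univ _
      have hzero : ∀ j ∈ Finset.univ, j ∉ Fi ∪ O → l (i, j) = 0 := by
        intro j _ hj
        rw [Finset.mem_union] at hj
        push_neg at hj
        obtain ⟨h1, h2⟩ := hj
        rw [hFi, Finset.mem_filter] at h1
        rw [hO, Finset.mem_filter] at h2
        simp only [Finset.mem_univ, true_and] at h1 h2
        by_contra h0
        exact h2 (by tauto)
      calc ∑ j, l (i, j) = ∑ j ∈ Fi ∪ O, l (i, j) :=
            (Finset.sum_subset hsub (by intro j hj hj'; exact hzero j hj hj')).symm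
        _ = ∑ j ∈ Fi, l (i, j) + ∑ j ∈ O, l (i, j) := Finset.sum_union hdis
        _ = l (i, j₁) + O.card := by
            rw [hj₁, Finset.sum_singleton]
            congr 1
            rw [Finset.sum_congr rfl (fun j hj => ?_), Finset.sum_const, nsmul_eq_mul, mul_one]
            rw [hO, Finset.mem_filter] at hj
            exact hj.2
    have hj₁mem : j₁ ∈ Fi := by rw [hj₁]; exact Finset.mem_singleton_self _
    rw [hFi, Finset.mem_filter] at hj₁mem
    have hrange := hG.1 (i, j₁)
    have hfrac1 : 0 < l (i, j₁) := lt_of_le_of_ne hrange.1 (Ne.symm hj₁mem.2.1)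
    have hfrac2 : l (i, j₁) < 1 := lt_of_le_of_ne hrange.2 hj₁mem.2.2
    have h1 : (O.card : ℝ) < (a : ℝ) := by rw [hsum, hsplit]; linarith
    have h2 : (a : ℝ) < (O.card : ℝ) + 1 := by rw [hsum, hsplit]; linarith
    have h1' : O.card < a := by exact_mod_cast h1
    have h2' : a < O.card + 1 := by exact_mod_cast h2
    omega
  · exact h


lemma good_mono {u : Fin n × Fin M → V} {k k' : ℕ} (hkk : k ≤ k') {l : Fin n × Fin M → ℝ}
    (hG : Good u a k l) : Good u a k' l :=
  ⟨hG.1, hG.2.1, hG.2.2.1, fun c hc => hG.2.2.2 c (le_trans hkk hc)⟩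

lemma purify (u : Fin n × Fin M → V) (k : ℕ) (l : Fin n × Fin M → ℝ) (hGl : Good u a k l) :
    ∃ l', Good u a k l' ∧ (∀ c, l' c ≠ l c → c ∈ FracK k l) ∧
      (FracK k l').card ≤ 2 * Module.finrank ℝ V := by
  classical
  suffices H : ∀ (B : ℕ) (l : Fin n × Fin M → ℝ), (FracK k l).card ≤ B → Good u a k l →
      ∃ l', Good u a k l' ∧ (∀ c, l' c ≠ l c → c ∈ FracK k l) ∧
        (FracK k l').card ≤ 2 * Module.finrank ℝ V from
    H (FracK k l).card l le_rfl hGl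
  intro B
  induction B with
  | zero =>
    intro l hcard hG
    exact ⟨l, hG, fun c hc => absurd rfl hc, by omega⟩
  | succ B IH =>
    intro l hcard hG
    by_cases hsmall : (FracK k l).card ≤ 2 * Module.finrank ℝ V
    · exact ⟨l, hG, fun c hc => absurd rfl hc, hsmall⟩
    push_neg at hsmall
    set F := FracK k l with hF
    -- row condition
    have hrows : ∀ i : Fin n, ∀ c ∈ F, c.1 = i →
        2 ≤ (F.filter (fun c' => c'.1 = i)).card := by
      intro i c hc hci
      rw [hF, mem_FracK] at hc
      have hrowlt : (i : ℕ) < k := hci ▸ hc.2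
      have hfrac : l (i, c.2) ≠ 0 ∧ l (i, c.2) ≠ 1 := by
        have : (i, c.2) = c := by rw [← hci]
        rw [this]; exact hc.1
      have h2 := two_frac_in_row (a := a) hG i hfrac
      refine le_trans h2 (Finset.card_le_card_of_injOn (fun j => (i, j)) ?_ ?_)
      · intro j hj
        rw [Finset.mem_coe, Finset.mem_filter] at hj ⊢
        refine ⟨?_, rfl⟩
        rw [hF, mem_FracK]
        exact ⟨hj.2, hrowlt⟩
      · intro x _ y _ hxy
        exact (Prod.mk.injEq _ _ _ _).mp hxy |>.2
    obtain ⟨v, hsupp, ⟨c₀, hc₀⟩, hvrows, hvbal⟩ := exists_kernel u F hsmall hrows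
    set S := F.filter (fun c => v c ≠ 0) with hS
    have hSne : S.Nonempty := by
      refine ⟨c₀, ?_⟩
      rw [hS, Finset.mem_filter]
      refine ⟨?_, hc₀⟩
      by_contra hcF
      exact hc₀ (hsupp c₀ hcF)
    have hfracS : ∀ c ∈ S, 0 < l c ∧ l c < 1 := by
      intro c hcS
      rw [hS, Finset.mem_filter, hF, mem_FracK] at hcS
      exact ⟨lt_of_le_of_ne (hG.1 c).1 (Ne.symm hcS.1.1.1),
        lt_of_le_of_ne (hG.1 c).2 hcS.1.1.2⟩
    set tf : Fin n × Fin M → ℝ :=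
      fun c => if 0 < v c then (1 - l c) / (v c) else (l c) / (-(v c)) with htf
    have htfval : ∀ c, tf c = if 0 < v c then (1 - l c) / (v c) else (l c) / (-(v c)) :=
      fun c => rfl
    set t : ℝ := S.inf' hSne tf with ht
    have htpos : 0 < t := by
      rw [ht, Finset.lt_inf'_iff]
      intro c hcS
      obtain ⟨h0, h1⟩ := hfracS c hcS
      have hvne : v c ≠ 0 := (Finset.mem_filter.mp hcS).2
      rw [htfval c]
      rcases lt_or_gt_of_ne hvne with hneg | hpos
      · rw [if_neg (by linarith)]
        exact div_pos h0 (by linarith)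
      · rw [if_pos hpos]
        exact div_pos (by linarith) hpos
    have htle : ∀ c ∈ S, t ≤ tf c := fun c hc => Finset.inf'_le _ hc
    set l'' : Fin n × Fin M → ℝ := fun c => l c + t * v c with hl''
    have hl''val : ∀ c, l'' c = l c + t * v c := fun c => rfl
    have hvS : ∀ c, v c ≠ 0 → c ∈ S := by
      intro c hvc
      rw [hS, Finset.mem_filter]
      refine ⟨?_, hvc⟩
      by_contra hcF
      exact hvc (hsupp c hcF)
    have hunch : ∀ c, v c = 0 → l'' c = l c := by
      intro c h0; rw [hl'']; simp [h0]
    have hG'' : Good u a k l'' := by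
      refine ⟨?_, ?_, ?_, ?_⟩
      · intro c
        by_cases hv0 : v c = 0
        · rw [hunch c hv0]; exact hG.1 c
        · have hcS := hvS c hv0
          obtain ⟨h0, h1⟩ := hfracS c hcS
          have htlec := htle c hcS
          rw [hl''val c]
          rcases lt_or_gt_of_ne hv0 with hneg | hpos
          · rw [htfval c, if_neg (by linarith)] at htlec
            constructor
            · have : t * (-(v c)) ≤ (l c / (-(v c))) * (-(v c)) :=
                mul_le_mul_of_nonneg_right htlec (by linarith)
              rw [div_mul_cancel₀ _ (by linarith : -(v c) ≠ 0)] at this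
              nlinarith
            · nlinarith
          · rw [htfval c, if_pos hpos] at htlec
            constructor
            · nlinarith
            · have : t * v c ≤ ((1 - l c) / (v c)) * v c :=
                mul_le_mul_of_nonneg_right htlec (le_of_lt hpos)
              rw [div_mul_cancel₀ _ (ne_of_gt hpos)] at this
              linarith
      · intro i
        have : ∑ j, l'' (i, j) = ∑ j, l (i, j) + t * ∑ j, v (i, j) := by
          rw [Finset.mul_sum, ← Finset.sum_add_distrib]
        rw [this, hvrows i, mul_zero, add_zero]
        exact hG.2.1 i
      · have : ∀ c, (l'' c - (a : ℝ) / (M : ℝ)) • u c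
            = (l c - (a : ℝ) / (M : ℝ)) • u c + t • (v c • u c) := by
          intro c
          rw [hl'', smul_smul, ← add_smul]
          ring_nf
        rw [Finset.sum_congr rfl (fun c _ => this c), Finset.sum_add_distrib,
          ← Finset.smul_sum, hvbal, smul_zero, add_zero]
        exact hG.2.2.1
      · intro c hc
        have hcF : c ∉ F := by
          rw [hF, mem_FracK]
          push_neg
          intro h
          omega
        rw [hunch c (by by_contra hv0; exact hcF (Finset.mem_filter.mp (hvS c hv0)).1)]
        exact hG.2.2.2 c hc
    -- the attained minimum coordinate becomes integral
    obtain ⟨cm, hcmS, hcmeq⟩ := Finset.exists_mem_eq_inf' hSne tf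
    have hcmint : l'' cm = 0 ∨ l'' cm = 1 := by
      have hvne : v cm ≠ 0 := (Finset.mem_filter.mp hcmS).2
      rw [← ht] at hcmeq
      rw [hl''val cm, hcmeq, htfval cm]
      rcases lt_or_gt_of_ne hvne with hneg | hpos
      · left
        rw [if_neg (by linarith)]
        have hnz : -(v cm) ≠ 0 := by linarith
        field_simp
        ring
      · right
        rw [if_pos hpos]
        rw [div_mul_cancel₀ _ (ne_of_gt hpos)]
        ring
    have hsub : FracK k l'' ⊆ F.erase cm := by
      intro c hc
      rw [mem_FracK] at hc
      have hcF : c ∈ F := by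
        by_cases hv0 : v c = 0
        · rw [hF, mem_FracK]
          rw [hunch c hv0] at hc
          exact hc
        · exact (Finset.mem_filter.mp (hvS c hv0)).1
      rw [Finset.mem_erase]
      refine ⟨?_, hcF⟩
      intro hccm
      rw [hccm] at hc
      rcases hcmint with h | h
      · exact hc.1.1 h
      · exact hc.1.2 h
    have hcard'' : (FracK k l'').card ≤ B := by
      have h1 : (FracK k l'').card ≤ (F.erase cm).card := Finset.card_le_card hsub
      have h2 : cm ∈ F := (Finset.mem_filter.mp hcmS).1
      rw [Finset.card_erase_of_mem h2] at h1
      omega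
    obtain ⟨l', hGl', hdiff', hcard'⟩ := IH l'' hcard'' hG''
    refine ⟨l', hGl', ?_, hcard'⟩
    intro c hc
    by_cases hl'l'' : l' c = l'' c
    · rw [hl'l''] at hc
      have hv0 : v c ≠ 0 := by
        intro h0
        exact hc (hunch c h0)
      exact (Finset.mem_filter.mp (hvS c hv0)).1
    · exact Finset.mem_of_mem_erase (hsub (hdiff' c hl'l''))


open Classical in
noncomputable def stepl (u : Fin n × Fin M → V) (a k : ℕ) (l : Fin n × Fin M → ℝ) :
    Fin n × Fin M → ℝ :=
  if h : Good u a k l then Classical.choose (purify u k l h) else l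

lemma stepl_spec {u : Fin n × Fin M → V} {k : ℕ} {l : Fin n × Fin M → ℝ}
    (h : Good u a k l) :
    Good u a k (stepl u a k l) ∧ (∀ c, stepl u a k l c ≠ l c → c ∈ FracK k l) ∧
      (FracK k (stepl u a k l)).card ≤ 2 * Module.finrank ℝ V := by
  classical
  rw [stepl, dif_pos h]
  exact Classical.choose_spec (purify u k l h)

noncomputable def gseq (u : Fin n × Fin M → V) (a : ℕ) : ℕ → (Fin n × Fin M → ℝ)
  | 0 => fun _ => (a : ℝ) / (M : ℝ)
  | (k+1) => stepl u a (k+1) (gseq u a k)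

lemma good_init (hM : 0 < M) (ha : a ≤ M) (u : Fin n × Fin M → V) :
    Good u a 0 (fun _ => (a : ℝ) / (M : ℝ)) := by
  have hM0 : (M : ℝ) ≠ 0 := Nat.cast_ne_zero.mpr (by omega)
  refine ⟨?_, ?_, ?_, fun c _ => rfl⟩
  · intro c
    constructor
    · positivity
    · rw [div_le_one (by positivity)]
      exact_mod_cast ha
  · intro i
    rw [Finset.sum_const, Finset.card_univ, Fintype.card_fin, nsmul_eq_mul]
    field_simp
  · rw [Finset.sum_eq_zero]
    intro c _
    rw [sub_self, zero_smul]

lemma gseq_good (hM : 0 < M) (ha : a ≤ M) (u : Fin n × Fin M → V) :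
    ∀ k, Good u a k (gseq u a k) := by
  intro k
  induction k with
  | zero => exact good_init hM ha u
  | succ k IH =>
    exact (stepl_spec (good_mono (Nat.le_succ k) IH)).1

lemma gseq_card (hM : 0 < M) (ha : a ≤ M) (u : Fin n × Fin M → V) (k : ℕ) :
    (FracK (k+1) (gseq u a (k+1))).card ≤ 2 * Module.finrank ℝ V :=
  (stepl_spec (good_mono (Nat.le_succ k) (gseq_good hM ha u k))).2.2

lemma gseq_diff (hM : 0 < M) (ha : a ≤ M) (u : Fin n × Fin M → V) (k : ℕ) :
    ∀ c, gseq u a (k+1) c ≠ gseq u a k c → c ∈ FracK (k+1) (gseq u a k) :=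
  (stepl_spec (good_mono (Nat.le_succ k) (gseq_good hM ha u k))).2.1

lemma gseq_agree (hM : 0 < M) (ha : a ≤ M) (u : Fin n × Fin M → V) (K : ℕ) :
    ∀ k', K ≤ k' → ∀ c, (c.1 : ℕ) < K → gseq u a k' c ≠ gseq u a K c →
      c ∈ FracK K (gseq u a K) := by
  intro k' hKk'
  induction k', hKk' using Nat.le_induction with
  | base => intro c _ hne; exact absurd rfl hne
  | succ k' hKk' IH =>
    intro c hrow hne
    by_cases h1 : gseq u a (k'+1) c = gseq u a k' c
    · rw [h1] at hne
      exact IH c hrow hne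
    · have hd := gseq_diff hM ha u k' c h1
      rw [mem_FracK] at hd
      by_cases h2 : gseq u a k' c = gseq u a K c
      · rw [mem_FracK]
        rw [h2] at hd
        exact ⟨hd.1, hrow⟩
      · exact IH c hrow h2

lemma lemmaA {n M : ℕ} (hM : 0 < M) (a : ℕ) (ha : a ≤ M) (N : ℝ)
    (u : Fin n × Fin M → V) (hu : ∀ c, ‖u c‖ ≤ N) :
    ∃ T : Fin n → Finset (Fin M), (∀ i, (T i).card = a) ∧
      ∀ k : Fin n, ‖∑ i ∈ Finset.Iic k, ((∑ j ∈ T i, u (i, j)) -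
        ((a : ℝ) / (M : ℝ)) • ∑ j, u (i, j))‖
        ≤ 2 * (Module.finrank ℝ V : ℝ) * N := by
  classical
  set δ : ℝ := (a : ℝ) / (M : ℝ) with hδ
  set ls : Fin n × Fin M → ℝ := gseq u a n with hls
  have hGn : Good u a n ls := gseq_good hM ha u n
  set Fi : Fin n → Finset (Fin M) :=
    fun i => Finset.univ.filter (fun j => ls (i, j) ≠ 0 ∧ ls (i, j) ≠ 1) with hFi
  set Oi : Fin n → Finset (Fin M) :=
    fun i => Finset.univ.filter (fun j => ls (i, j) = 1) with hOi
  have hdisj : ∀ i, Disjoint (Oi i) (Fi i) := by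
    intro i
    rw [Finset.disjoint_left]
    intro j hjO hjF
    rw [hOi, Finset.mem_filter] at hjO
    rw [hFi, Finset.mem_filter] at hjF
    exact hjF.2.2 hjO.2
  have hsplit : ∀ i : Fin n, (a : ℝ) = (Oi i).card + ∑ j ∈ Fi i, ls (i, j) := by
    intro i
    have hsub : Oi i ∪ Fi i ⊆ Finset.univ := Finset.subset_univ _
    have hzero : ∀ j ∈ Finset.univ, j ∉ Oi i ∪ Fi i → ls (i, j) = 0 := by
      intro j _ hj
      rw [Finset.mem_union] at hj
      push_neg at hj
      obtain ⟨h1, h2⟩ := hj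
      rw [hOi, Finset.mem_filter] at h1
      rw [hFi, Finset.mem_filter] at h2
      simp only [Finset.mem_univ, true_and] at h1 h2
      by_contra h0
      exact h2 ⟨h0, h1⟩
    calc (a : ℝ) = ∑ j, ls (i, j) := (hGn.2.1 i).symm
      _ = ∑ j ∈ Oi i ∪ Fi i, ls (i, j) :=
          (Finset.sum_subset hsub (fun j hj hj' => hzero j hj hj')).symm
      _ = ∑ j ∈ Oi i, ls (i, j) + ∑ j ∈ Fi i, ls (i, j) := Finset.sum_union (hdisj i)
      _ = (Oi i).card + ∑ j ∈ Fi i, ls (i, j) := by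
          congr 1
          rw [Finset.sum_congr rfl (fun j hj => ?_), Finset.sum_const, nsmul_eq_mul, mul_one]
          rw [hOi, Finset.mem_filter] at hj
          exact hj.2
  have hOile : ∀ i, (Oi i).card ≤ a := by
    intro i
    have h1 : (0 : ℝ) ≤ ∑ j ∈ Fi i, ls (i, j) :=
      Finset.sum_nonneg (fun j _ => (hGn.1 (i, j)).1)
    have := hsplit i
    have : ((Oi i).card : ℝ) ≤ (a : ℝ) := by linarith
    exact_mod_cast this
  set si : Fin n → ℕ := fun i => a - (Oi i).card with hsi
  have hsiF : ∀ i, si i ≤ (Fi i).card := by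
    intro i
    have h2 : ∑ j ∈ Fi i, ls (i, j) ≤ ((Fi i).card : ℝ) := by
      calc ∑ j ∈ Fi i, ls (i, j) ≤ ∑ j ∈ Fi i, 1 :=
            Finset.sum_le_sum (fun j _ => (hGn.1 (i, j)).2)
        _ = ((Fi i).card : ℝ) := by rw [Finset.sum_const, nsmul_eq_mul, mul_one]
    have h3 : ((si i : ℕ) : ℝ) ≤ ((Fi i).card : ℝ) := by
      have hsival : ((si i : ℕ) : ℝ) = (a : ℝ) - ((Oi i).card : ℝ) := by
        show (((a - (Oi i).card : ℕ)) : ℝ) = _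
        push_cast [Nat.cast_sub (hOile i)]
        ring
      rw [hsival]
      have := hsplit i
      linarith
    exact_mod_cast h3
  have hGi : ∀ i, ∃ G ⊆ Fi i, G.card = si i :=
    fun i => Finset.exists_subset_card_eq (hsiF i)
  choose G hGsub hGcard using hGi
  set T : Fin n → Finset (Fin M) := fun i => Oi i ∪ G i with hT
  have hTcard : ∀ i, (T i).card = a := by
    intro i
    rw [hT]
    have hdisj2 : Disjoint (Oi i) (G i) :=
      Finset.disjoint_of_subset_right (hGsub i) (hdisj i)
    rw [Finset.card_union_of_disjoint hdisj2, hGcard i]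
    show (Oi i).card + (a - (Oi i).card) = a
    have := hOile i
    omega
  set lfin : Fin n × Fin M → ℝ := fun c => if c.2 ∈ T c.1 then (1 : ℝ) else 0 with hlfin
  have hlfinval : ∀ c : Fin n × Fin M, lfin c = if c.2 ∈ T c.1 then (1 : ℝ) else 0 :=
    fun c => rfl
  have hlfin01 : ∀ c, lfin c = 0 ∨ lfin c = 1 := by
    intro c
    rw [hlfinval c]
    split_ifs <;> simp
  have hfin_diff : ∀ c, lfin c ≠ ls c → (ls c ≠ 0 ∧ ls c ≠ 1) := by
    rintro ⟨i, j⟩ hne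
    by_cases h1 : ls (i, j) = 1
    · exfalso
      have hjO : j ∈ Oi i := by rw [hOi, Finset.mem_filter]; exact ⟨Finset.mem_univ _, h1⟩
      have : lfin (i, j) = 1 := by
        rw [hlfinval]
        exact if_pos (Finset.mem_union_left _ hjO)
      exact hne (by rw [this, h1])
    by_cases h0 : ls (i, j) = 0
    · exfalso
      have hjF : j ∉ Fi i := by
        rw [hFi, Finset.mem_filter]
        push_neg
        intro _ hc
        exact absurd h0 hc
      have hjO : j ∉ Oi i := by
        rw [hOi, Finset.mem_filter]
        push_neg
        intro _
        rw [h0]; norm_num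
      have hjG : j ∉ G i := fun hj => hjF (hGsub i hj)
      have : lfin (i, j) = 0 := by
        rw [hlfinval]
        refine if_neg ?_
        rw [hT, Finset.mem_union]
        push_neg
        exact ⟨hjO, hjG⟩
      exact hne (by rw [this, h0])
    exact ⟨h0, h1⟩
  refine ⟨T, hTcard, ?_⟩
  intro k
  set K : ℕ := (k : ℕ) + 1 with hK
  have hKn : K ≤ n := k.isLt
  set lK : Fin n × Fin M → ℝ := gseq u a K with hlK
  have hGK : Good u a K lK := gseq_good hM ha u K
  have hN : 0 ≤ N := le_trans (norm_nonneg _) (hu (k, ⟨0, hM⟩))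
  -- rewrite summand
  have hterm : ∀ i : Fin n, (∑ j ∈ T i, u (i, j)) - δ • ∑ j, u (i, j)
      = ∑ j, (lfin (i, j) - δ) • u (i, j) := by
    intro i
    have h1 : ∑ j, lfin (i, j) • u (i, j) = ∑ j ∈ T i, u (i, j) := by
      calc ∑ j, lfin (i, j) • u (i, j)
          = ∑ j, (if j ∈ T i then u (i, j) else 0) := by
            refine Finset.sum_congr rfl (fun j _ => ?_)
            rw [hlfinval]
            show (if j ∈ T i then (1:ℝ) else 0) • u (i, j) = _
            split_ifs with h
            · rw [one_smul]
            · rw [zero_smul]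
        _ = ∑ j ∈ T i, u (i, j) := by rw [Finset.sum_ite_mem, Finset.univ_inter]
    calc (∑ j ∈ T i, u (i, j)) - δ • ∑ j, u (i, j)
        = ∑ j, lfin (i, j) • u (i, j) - ∑ j, δ • u (i, j) := by
          rw [h1, Finset.smul_sum]
      _ = ∑ j, (lfin (i, j) - δ) • u (i, j) := by
          rw [← Finset.sum_sub_distrib]
          congr 1; funext j; rw [sub_smul]
  have hZ : ∑ i ∈ Finset.Iic k, ∑ j, (lK (i, j) - δ) • u (i, j) = 0 := by
    have hfull : ∑ i : Fin n, ∑ j, (lK (i, j) - δ) • u (i, j) = 0 := by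
      rw [← Finset.sum_product']
      rw [show (Finset.univ ×ˢ Finset.univ : Finset (Fin n × Fin M)) = Finset.univ from
        Finset.univ_product_univ]
      exact hGK.2.2.1
    rw [← hfull]
    refine Finset.sum_subset (Finset.subset_univ _) ?_
    intro i _ hi
    rw [Finset.mem_Iic] at hi
    have hiK : K ≤ (i : ℕ) := by
      rw [hK]
      have : ¬ ((i:ℕ) ≤ (k:ℕ)) := fun h => hi (Fin.mk_le_mk.mp h)
      omega
    rw [Finset.sum_eq_zero]
    intro j _
    rw [hGK.2.2.2 (i, j) hiK, sub_self, zero_smul]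
  have hsum : ∑ i ∈ Finset.Iic k, ((∑ j ∈ T i, u (i, j)) - δ • ∑ j, u (i, j))
      = ∑ i ∈ Finset.Iic k, ∑ j, (lfin (i, j) - lK (i, j)) • u (i, j) := by
    rw [Finset.sum_congr rfl (fun i _ => hterm i)]
    rw [← sub_zero (∑ i ∈ Finset.Iic k, ∑ j, (lfin (i, j) - δ) • u (i, j)), ← hZ,
      ← Finset.sum_sub_distrib]
    congr 1; funext i
    rw [← Finset.sum_sub_distrib]
    congr 1; funext j
    rw [← sub_smul]
    congr 1
    ring
  rw [hsum]
  -- product sum and diff set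
  rw [← Finset.sum_product (Finset.Iic k) Finset.univ
    (fun c => (lfin c - lK c) • u c)]
  set P : Finset (Fin n × Fin M) := Finset.Iic k ×ˢ Finset.univ with hP
  set D : Finset (Fin n × Fin M) := P.filter (fun c => lfin c ≠ lK c) with hD
  have hDsum : ∑ c ∈ P, (lfin c - lK c) • u c = ∑ c ∈ D, (lfin c - lK c) • u c := by
    refine (Finset.sum_subset ?_ ?_).symm
    · rw [hD]; exact Finset.filter_subset _ _
    · intro c hc hc'
      have heq : lfin c = lK c := by
        by_contra hne
        exact hc' (by rw [hD, Finset.mem_filter]; exact ⟨hc, hne⟩)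
      rw [heq, sub_self, zero_smul]
  rw [hDsum]
  have hDsub : D ⊆ FracK K lK := by
    intro c hc
    rw [hD, Finset.mem_filter, hP, Finset.mem_product, Finset.mem_Iic] at hc
    obtain ⟨⟨hc1, _⟩, hc2⟩ := hc
    have hrow : (c.1 : ℕ) < K := by
      rw [hK]
      have : (c.1 : ℕ) ≤ (k : ℕ) := hc1
      omega
    by_cases h1 : lfin c = ls c
    · have hne : ls c ≠ lK c := fun h => hc2 (h1.trans h)
      exact gseq_agree hM ha u K n hKn c hrow hne
    · have hfrac := hfin_diff c h1
      by_cases h2 : ls c = lK c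
      · rw [mem_FracK]
        rw [h2] at hfrac
        exact ⟨hfrac, hrow⟩
      · exact gseq_agree hM ha u K n hKn c hrow h2
  have hDcard : D.card ≤ 2 * Module.finrank ℝ V := by
    refine le_trans (Finset.card_le_card hDsub) ?_
    rw [hK]
    exact gseq_card hM ha u (k : ℕ)
  calc ‖∑ c ∈ D, (lfin c - lK c) • u c‖ ≤ ∑ c ∈ D, ‖(lfin c - lK c) • u c‖ :=
        norm_sum_le _ _
    _ ≤ ∑ c ∈ D, N := by
        refine Finset.sum_le_sum (fun c _ => ?_)
        rw [norm_smul, Real.norm_eq_abs]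
        have h1 : |lfin c - lK c| ≤ 1 := by
          have ha1 := hGK.1 c
          rcases hlfin01 c with h | h <;> rw [h] <;> rw [abs_le] <;>
            constructor <;> linarith [ha1.1, ha1.2]
        calc |lfin c - lK c| * ‖u c‖ ≤ 1 * N := by
              refine mul_le_mul h1 (hu c) (norm_nonneg _) zero_le_one
          _ = N := one_mul N
    _ = D.card * N := by rw [Finset.sum_const, nsmul_eq_mul]
    _ ≤ 2 * (Module.finrank ℝ V : ℝ) * N := by
        refine mul_le_mul_of_nonneg_right ?_ hN
        exact_mod_cast hDcard


lemma lemmaB : ∀ (M : ℕ), 1 ≤ M → ∀ (n : ℕ) (y : Fin n → Fin M → V) (N : ℝ),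
    (∀ i j, ‖y i j‖ ≤ N) →
    ∃ τ : Fin n → Equiv.Perm (Fin M), ∀ (k : Fin n) (j : Fin M),
      ‖(∑ i ∈ Finset.Iic k, y i (τ i j)) -
          ((M : ℝ))⁻¹ • ∑ i ∈ Finset.Iic k, ∑ j', y i j'‖
        ≤ 2 * (Module.finrank ℝ V : ℝ) * N * (3 - 3 / (M : ℝ)) := by
  intro M
  induction M using Nat.strong_induction_on with
  | _ M IH =>
  intro hM n y N hy
  rcases eq_or_lt_of_le hM with hM1 | hM2
  · -- base case M = 1
    subst hM1
    refine ⟨fun _ => 1, ?_⟩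
    intro k j
    have hj : j = 0 := Subsingleton.elim j 0
    have h1 : ∀ i : Fin n, ∑ j' : Fin 1, y i j' = y i 0 := fun i => Fin.sum_univ_one _
    have hperm : ∀ i : Fin n, ((1 : Equiv.Perm (Fin 1)) j) = (0 : Fin 1) := by
      intro i; rw [hj]; rfl
    have : (∑ i ∈ Finset.Iic k, y i ((1 : Equiv.Perm (Fin 1)) j)) -
        (((1:ℕ) : ℝ))⁻¹ • ∑ i ∈ Finset.Iic k, ∑ j', y i j' = 0 := by
      rw [Finset.sum_congr rfl (fun i _ => by rw [hperm i])]
      rw [Finset.sum_congr rfl (fun i (_ : i ∈ Finset.Iic k) => h1 i)]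
      norm_num
    rw [this, norm_zero]
    norm_num
  · -- inductive step, M ≥ 2
    have hM2' : 2 ≤ M := hM2
    set d : ℕ := Module.finrank ℝ V with hd
    set A : ℕ := M / 2 with hA
    set B : ℕ := M - A with hB
    have ha1 : 1 ≤ A := by omega
    have hb1 : 1 ≤ B := by omega
    have hab : A + B = M := by omega
    have haM : A < M := by omega
    have hbM : B < M := by omega
    have h3a : 3 * A ≤ 2 * M := by omega
    have h3b : 3 * B ≤ 2 * M := by omega
    have haM' : A ≤ M := le_of_lt haM
    -- apply Lemma A
    obtain ⟨T, hTcard, hTbound⟩ := lemmaA (by omega : 0 < M) A haM' N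
      (fun c : Fin n × Fin M => y c.1 c.2) (fun c => hy c.1 c.2)
    dsimp only at hTbound
    have hTccard : ∀ i, (T i)ᶜ.card = B := by
      intro i
      rw [Finset.card_compl, hTcard i, Fintype.card_fin]
    -- equivalences
    set eA : ∀ i : Fin n, Fin A ≃ {x // x ∈ T i} :=
      fun i => ((T i).equivFin.trans (finCongr (hTcard i))).symm with heA
    set eB : ∀ i : Fin n, Fin B ≃ {x // x ∈ (T i)ᶜ} :=
      fun i => (((T i)ᶜ).equivFin.trans (finCongr (hTccard i))).symm with heB
    set yA : Fin n → Fin A → V := fun i p => y i ((eA i p) : Fin M) with hyA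
    set yB : Fin n → Fin B → V := fun i q => y i ((eB i q) : Fin M) with hyB
    obtain ⟨σA, hσA⟩ := IH A haM ha1 n yA N (fun i p => hy i _)
    obtain ⟨σB, hσB⟩ := IH B hbM hb1 n yB N (fun i q => hy i _)
    -- assemble permutations
    set splitE : Fin M ≃ Fin A ⊕ Fin B :=
      (finCongr hab.symm).trans finSumFinEquiv.symm with hsplitE
    set mergE : ∀ i : Fin n, (Fin A ⊕ Fin B) ≃ Fin M := fun i =>
      (Equiv.sumCongr (eA i)
        ((eB i).trans (Equiv.subtypeEquivRight (fun x => Finset.mem_compl)))).trans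
        (Equiv.sumCompl (fun x => x ∈ T i)) with hmergE
    set τ : Fin n → Equiv.Perm (Fin M) := fun i =>
      (splitE.trans ((Equiv.sumCongr (σA i) (σB i)).trans (mergE i))) with hτ
    refine ⟨τ, ?_⟩
    intro k j
    have hτval : ∀ i, (τ i) j = (mergE i) ((Equiv.sumCongr (σA i) (σB i)) (splitE j)) :=
      fun i => rfl
    -- positivity facts
    have hMR : (0:ℝ) < (M:ℝ) := by exact_mod_cast (by omega : 0 < M)
    have haR : (0:ℝ) < (A:ℝ) := by exact_mod_cast (by omega : 0 < A)
    have hbR : (0:ℝ) < (B:ℝ) := by exact_mod_cast (by omega : 0 < B)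
    have hN : 0 ≤ N := le_trans (norm_nonneg _) (hy k j)
    have hdN : (0:ℝ) ≤ 2 * (d:ℝ) * N := by positivity
    have hnum : ∀ (c : ℕ), 1 ≤ c → 3 * c ≤ 2 * M →
        2*(d:ℝ)*N*(3 - 3/(c:ℝ)) + (c:ℝ)⁻¹ * (2*(d:ℝ)*N) ≤ 2*(d:ℝ)*N*(3 - 3/(M:ℝ)) := by
      intro c hc1 h3c
      have hcR : (0:ℝ) < (c:ℝ) := by exact_mod_cast (by omega : 0 < c)
      have hkey : 3/(M:ℝ) ≤ 2/(c:ℝ) := by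
        rw [div_le_div_iff₀ hMR hcR]
        exact_mod_cast (by omega : 3 * c ≤ 2 * M)
      have e : 2*(d:ℝ)*N*(3 - 3/(c:ℝ)) + (c:ℝ)⁻¹ * (2*(d:ℝ)*N)
          = 2*(d:ℝ)*N*(3 - 2/(c:ℝ)) := by
        field_simp
        ring
      rw [e]
      exact mul_le_mul_of_nonneg_left (by linarith) hdN
    -- complement version of Lemma A bound
    have hTboundC : ‖∑ i ∈ Finset.Iic k, ((∑ j' ∈ (T i)ᶜ, y i j') -
        ((B:ℝ)/(M:ℝ)) • ∑ j', y i j')‖ ≤ 2 * (d:ℝ) * N := by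
      have hBR : (B:ℝ) = (M:ℝ) - (A:ℝ) := by
        have : (A:ℝ) + (B:ℝ) = (M:ℝ) := by exact_mod_cast hab
        linarith
      have hneg : ∀ i : Fin n, (∑ j' ∈ (T i)ᶜ, y i j') - ((B:ℝ)/(M:ℝ)) • ∑ j', y i j'
          = -((∑ j' ∈ T i, y i j') - ((A:ℝ)/(M:ℝ)) • ∑ j', y i j') := by
        intro i
        have h1 : ∑ j' ∈ (T i)ᶜ, y i j' = (∑ j', y i j') - ∑ j' ∈ T i, y i j' := by
          rw [eq_sub_iff_add_eq]
          exact Finset.sum_compl_add_sum (T i) _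
        have h2 : ((B:ℝ)/(M:ℝ)) = 1 - (A:ℝ)/(M:ℝ) := by
          rw [hBR]
          field_simp
        rw [h1, h2, sub_smul, one_smul]
        abel
      rw [Finset.sum_congr rfl (fun i _ => hneg i)]
      rw [Finset.sum_neg_distrib, norm_neg]
      exact hTbound k
    rcases hs : splitE j with p | q
    · -- column in the A side
      have happ : ∀ i, y i (τ i j) = yA i (σA i p) := by
        intro i
        rw [hτval i, hs]
        rfl
      have hrowA : ∀ i : Fin n, ∑ p' : Fin A, yA i p' = ∑ j' ∈ T i, y i j' := by
        intro i
        rw [← Finset.sum_coe_sort (T i) (fun j' => y i j')]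
        exact Equiv.sum_comp (eA i) (fun t => y i (t : Fin M))
      have hL : ∑ i ∈ Finset.Iic k, y i (τ i j) = ∑ i ∈ Finset.Iic k, yA i (σA i p) :=
        Finset.sum_congr rfl (fun i _ => happ i)
      have hR : ∑ i ∈ Finset.Iic k, ∑ p' : Fin A, yA i p'
          = ∑ i ∈ Finset.Iic k, ∑ j' ∈ T i, y i j' :=
        Finset.sum_congr rfl (fun i _ => hrowA i)
      have key : (∑ i ∈ Finset.Iic k, y i (τ i j)) -
          ((M : ℝ))⁻¹ • ∑ i ∈ Finset.Iic k, ∑ j', y i j'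
          = ((∑ i ∈ Finset.Iic k, yA i (σA i p)) -
              ((A : ℝ))⁻¹ • ∑ i ∈ Finset.Iic k, ∑ p', yA i p')
            + ((A : ℝ))⁻¹ • (∑ i ∈ Finset.Iic k, ((∑ j' ∈ T i, y i j') -
                ((A:ℝ)/(M:ℝ)) • ∑ j', y i j')) := by
        rw [hL, hR, Finset.sum_sub_distrib, ← Finset.smul_sum, smul_sub, smul_smul]
        have hAM : (A:ℝ)⁻¹ * ((A:ℝ)/(M:ℝ)) = (M:ℝ)⁻¹ := by
          field_simp
        rw [hAM]
        abel
      calc ‖(∑ i ∈ Finset.Iic k, y i (τ i j)) -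
          ((M : ℝ))⁻¹ • ∑ i ∈ Finset.Iic k, ∑ j', y i j'‖
          = ‖((∑ i ∈ Finset.Iic k, yA i (σA i p)) -
              ((A : ℝ))⁻¹ • ∑ i ∈ Finset.Iic k, ∑ p', yA i p')
            + ((A : ℝ))⁻¹ • (∑ i ∈ Finset.Iic k, ((∑ j' ∈ T i, y i j') -
                ((A:ℝ)/(M:ℝ)) • ∑ j', y i j'))‖ := by rw [key]
        _ ≤ ‖(∑ i ∈ Finset.Iic k, yA i (σA i p)) -
              ((A : ℝ))⁻¹ • ∑ i ∈ Finset.Iic k, ∑ p', yA i p'‖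
            + ‖((A : ℝ))⁻¹ • (∑ i ∈ Finset.Iic k, ((∑ j' ∈ T i, y i j') -
                ((A:ℝ)/(M:ℝ)) • ∑ j', y i j'))‖ := norm_add_le _ _
        _ ≤ 2*(d:ℝ)*N*(3 - 3/(A:ℝ)) + (A:ℝ)⁻¹ * (2*(d:ℝ)*N) := by
            refine add_le_add (hσA k p) ?_
            rw [norm_smul, Real.norm_eq_abs, abs_of_pos (inv_pos.mpr haR)]
            exact mul_le_mul_of_nonneg_left (hTbound k) (le_of_lt (inv_pos.mpr haR))
        _ ≤ 2*(d:ℝ)*N*(3 - 3/(M:ℝ)) := hnum A ha1 h3a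
    · -- column in the B side
      have happ : ∀ i, y i (τ i j) = yB i (σB i q) := by
        intro i
        rw [hτval i, hs]
        rfl
      have hrowB : ∀ i : Fin n, ∑ q' : Fin B, yB i q' = ∑ j' ∈ (T i)ᶜ, y i j' := by
        intro i
        rw [← Finset.sum_coe_sort ((T i)ᶜ) (fun j' => y i j')]
        exact Equiv.sum_comp (eB i) (fun t => y i (t : Fin M))
      have hL : ∑ i ∈ Finset.Iic k, y i (τ i j) = ∑ i ∈ Finset.Iic k, yB i (σB i q) :=
        Finset.sum_congr rfl (fun i _ => happ i)
      have hR : ∑ i ∈ Finset.Iic k, ∑ q' : Fin B, yB i q'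
          = ∑ i ∈ Finset.Iic k, ∑ j' ∈ (T i)ᶜ, y i j' :=
        Finset.sum_congr rfl (fun i _ => hrowB i)
      have key : (∑ i ∈ Finset.Iic k, y i (τ i j)) -
          ((M : ℝ))⁻¹ • ∑ i ∈ Finset.Iic k, ∑ j', y i j'
          = ((∑ i ∈ Finset.Iic k, yB i (σB i q)) -
              ((B : ℝ))⁻¹ • ∑ i ∈ Finset.Iic k, ∑ q', yB i q')
            + ((B : ℝ))⁻¹ • (∑ i ∈ Finset.Iic k, ((∑ j' ∈ (T i)ᶜ, y i j') -
                ((B:ℝ)/(M:ℝ)) • ∑ j', y i j')) := by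
        rw [hL, hR, Finset.sum_sub_distrib, ← Finset.smul_sum, smul_sub, smul_smul]
        have hBM : (B:ℝ)⁻¹ * ((B:ℝ)/(M:ℝ)) = (M:ℝ)⁻¹ := by
          field_simp
        rw [hBM]
        abel
      calc ‖(∑ i ∈ Finset.Iic k, y i (τ i j)) -
          ((M : ℝ))⁻¹ • ∑ i ∈ Finset.Iic k, ∑ j', y i j'‖
          = ‖((∑ i ∈ Finset.Iic k, yB i (σB i q)) -
              ((B : ℝ))⁻¹ • ∑ i ∈ Finset.Iic k, ∑ q', yB i q')
            + ((B : ℝ))⁻¹ • (∑ i ∈ Finset.Iic k, ((∑ j' ∈ (T i)ᶜ, y i j') -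
                ((B:ℝ)/(M:ℝ)) • ∑ j', y i j'))‖ := by rw [key]
        _ ≤ ‖(∑ i ∈ Finset.Iic k, yB i (σB i q)) -
              ((B : ℝ))⁻¹ • ∑ i ∈ Finset.Iic k, ∑ q', yB i q'‖
            + ‖((B : ℝ))⁻¹ • (∑ i ∈ Finset.Iic k, ((∑ j' ∈ (T i)ᶜ, y i j') -
                ((B:ℝ)/(M:ℝ)) • ∑ j', y i j'))‖ := norm_add_le _ _
        _ ≤ 2*(d:ℝ)*N*(3 - 3/(B:ℝ)) + (B:ℝ)⁻¹ * (2*(d:ℝ)*N) := by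
            refine add_le_add (hσB k q) ?_
            rw [norm_smul, Real.norm_eq_abs, abs_of_pos (inv_pos.mpr hbR)]
            exact mul_le_mul_of_nonneg_left hTboundC (le_of_lt (inv_pos.mpr hbR))
        _ ≤ 2*(d:ℝ)*N*(3 - 3/(M:ℝ)) := hnum B hb1 h3b


end MKwap

open Finset

theorem multidim_kwapien (V : Type*) [NormedAddCommGroup V] [NormedSpace ℝ V]
    [FiniteDimensional ℝ V]
    (n m : ℕ)
    (v : Fin n → Fin m → V)
    (hbd : ∀ i j, ‖v i j‖ ≤ 1)
    (x : Fin n → V)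
    (hx : ∀ k : Fin n, x k = (1 / (m : ℝ)) • ∑ i ∈ Finset.Iic k, ∑ j, v i j) :
    ∃ π : Fin n → Equiv.Perm (Fin m),
      ∀ (k : Fin n) (j : Fin m),
        ‖(∑ i ∈ Finset.Iic k, v i ((π i) j)) - x k‖ ≤
          8 * (Module.finrank ℝ V : ℝ) ^ 2 / Real.log 1.5 := by
  rcases Nat.eq_zero_or_pos m with hm0 | hm
  · subst hm0
    exact ⟨fun _ => 1, fun k j => j.elim0⟩
  set d : ℕ := Module.finrank ℝ V with hd
  set w : Fin n → Fin m → V := fun i j => v i j - (m:ℝ)⁻¹ • ∑ j', v i j' with hwdef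
  have hwval : ∀ i j, w i j = v i j - (m:ℝ)⁻¹ • ∑ j', v i j' := fun _ _ => rfl
  have hmR : (0:ℝ) < (m:ℝ) := by exact_mod_cast hm
  have havg : ∀ i, ‖(m:ℝ)⁻¹ • ∑ j', v i j'‖ ≤ 1 := by
    intro i
    rw [norm_smul, Real.norm_eq_abs, abs_of_pos (inv_pos.mpr hmR)]
    have h1 : ‖∑ j', v i j'‖ ≤ (m:ℝ) := by
      refine le_trans (norm_sum_le _ _) ?_
      calc ∑ j' : Fin m, ‖v i j'‖ ≤ ∑ j' : Fin m, 1 := Finset.sum_le_sum (fun j' _ => hbd i j')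
        _ = (m:ℝ) := by rw [Finset.sum_const, Finset.card_univ, Fintype.card_fin,
              nsmul_eq_mul, mul_one]
    calc (m:ℝ)⁻¹ * ‖∑ j', v i j'‖ ≤ (m:ℝ)⁻¹ * (m:ℝ) :=
          mul_le_mul_of_nonneg_left h1 (le_of_lt (inv_pos.mpr hmR))
      _ = 1 := inv_mul_cancel₀ (ne_of_gt hmR)
  have hw2 : ∀ i j, ‖w i j‖ ≤ 2 := by
    intro i j
    rw [hwval]
    calc ‖v i j - (m:ℝ)⁻¹ • ∑ j', v i j'‖
        ≤ ‖v i j‖ + ‖(m:ℝ)⁻¹ • ∑ j', v i j'‖ := norm_sub_le _ _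
      _ ≤ 1 + 1 := add_le_add (hbd i j) (havg i)
      _ = 2 := by norm_num
  obtain ⟨τ, hτ⟩ := MKwap.lemmaB m hm n w 2 hw2
  refine ⟨τ, ?_⟩
  intro k j
  have hrow0 : ∀ i, ∑ j', w i j' = 0 := by
    intro i
    rw [Finset.sum_congr rfl (fun j' _ => hwval i j'), Finset.sum_sub_distrib,
      Finset.sum_const, Finset.card_univ, Fintype.card_fin,
      ← Nat.cast_smul_eq_nsmul ℝ m, smul_smul, mul_inv_cancel₀ (ne_of_gt hmR), one_smul,
      sub_self]
  have hdev : (∑ i ∈ Finset.Iic k, v i ((τ i) j)) - x k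
      = ∑ i ∈ Finset.Iic k, w i ((τ i) j) := by
    rw [hx k, Finset.sum_congr rfl (fun i (_ : i ∈ Finset.Iic k) => hwval i ((τ i) j)),
      Finset.sum_sub_distrib, ← Finset.smul_sum, one_div]
  have hbound := hτ k j
  rw [Finset.sum_congr rfl (fun i (_ : i ∈ Finset.Iic k) => hrow0 i),
    Finset.sum_const_zero, smul_zero, sub_zero] at hbound
  rw [hdev]
  refine le_trans hbound ?_
  -- numeric endgame : 4d(3-3/m) ≤ 12d ≤ 16d² ≤ 8d²/log 1.5
  have hlogpos : 0 < Real.log 1.5 := Real.log_pos (by norm_num)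
  have hloghalf : Real.log 1.5 ≤ 0.5 := by
    have := Real.log_le_sub_one_of_pos (by norm_num : (0:ℝ) < 1.5)
    linarith
  have hdR : (0:ℝ) ≤ (d:ℝ) := Nat.cast_nonneg d
  have h3m : 3 - 3/(m:ℝ) ≤ 3 := by
    have : (0:ℝ) ≤ 3/(m:ℝ) := by positivity
    linarith
  have h3m' : (0:ℝ) ≤ 3 - 3/(m:ℝ) := by
    have h1 : 3/(m:ℝ) ≤ 3 := by
      rw [div_le_iff₀ hmR]
      have : (1:ℝ) ≤ (m:ℝ) := by exact_mod_cast hm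
      nlinarith
    linarith
  have h1 : 2*(d:ℝ)*2*(3 - 3/(m:ℝ)) ≤ 12 * (d:ℝ) := by nlinarith
  have h2 : (12:ℝ) * (d:ℝ) ≤ 16 * (d:ℝ)^2 := by
    have h2n : 12 * d ≤ 16 * d^2 := by
      rcases Nat.eq_zero_or_pos d with h | h
      · simp [h]
      · nlinarith
    exact_mod_cast h2n
  have h3 : (16:ℝ) * (d:ℝ)^2 ≤ 8 * (d:ℝ)^2 / Real.log 1.5 := by
    rw [le_div_iff₀ hlogpos]
    nlinarith [sq_nonneg ((d:ℝ))]
  linarith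
end

section
/- Let $\{\xi_i\}_{i\in I}\subset\mathbb{R}^d$ with $I$ at most countable, $0<\|\xi_i\|\le 1$ (Euclidean norm), and let $\{\alpha_i\}_{i\in I}$ be strictly positive reals with $\sum_i\alpha_i\le 1$ and $\sum_i\alpha_i\xi_i=0$. Then there exist indices $i_1,\dots,i_m\in I$ with $1\le m\le d+1$ and scalars $0<\beta_k\le\alpha_{i_k}$ such that $\sum_{k=1}^m\beta_k\xi_{i_k}=0$. -/
open Finset

section Aux

variable {E : Type*} [NormedAddCommGroup E] [NormedSpace ℝ E] [FiniteDimensional ℝ E]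

lemma aux_mem_convexHull {I : Type*} [Nonempty I] (ξ : I → E) (α : I → ℝ)
    (hα : ∀ i, 0 < α i) (hαsum : Summable α)
    (hsp : Submodule.span ℝ (Set.range ξ) = ⊤)
    (hzero : HasSum (fun i => α i • ξ i) 0) :
    (0 : E) ∈ convexHull ℝ (Set.range ξ) := by
  classical
  set C : Set E := convexHull ℝ (Set.range ξ) with hCdef
  have hC : Convex ℝ C := convex_convexHull ℝ _
  set s : ℝ := ∑' i, α i with hsdef
  have hs : 0 < s := Summable.tsum_pos hαsum (fun i => (hα i).le) (Classical.arbitrary I)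
    (hα (Classical.arbitrary I))
  -- 0 is in the closure of the convex hull
  have hcl : (0 : E) ∈ closure C := by
    have h1 : Filter.Tendsto (fun F : Finset I => ∑ i ∈ F, α i • ξ i)
        Filter.atTop (nhds 0) := hzero
    have h2 : Filter.Tendsto (fun F : Finset I => ∑ i ∈ F, α i)
        Filter.atTop (nhds s) := hαsum.hasSum
    have h3 : Filter.Tendsto
        (fun F : Finset I => (∑ i ∈ F, α i)⁻¹ • ∑ i ∈ F, α i • ξ i)
        Filter.atTop (nhds (s⁻¹ • (0 : E))) := (h2.inv₀ hs.ne').smul h1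
    rw [smul_zero] at h3
    refine mem_closure_of_tendsto h3 ?_
    filter_upwards [Filter.eventually_ge_atTop ({Classical.arbitrary I} : Finset I)] with F hF
    have hFpos : 0 < ∑ i ∈ F, α i :=
      Finset.sum_pos (fun i _ => hα i) ⟨_, hF (Finset.mem_singleton_self _)⟩
    have := Finset.centerMass_mem_convexHull F (fun i _ => (hα i).le) hFpos
      (fun i _ => (Set.mem_range_self i : ξ i ∈ Set.range ξ))
    simpa [Finset.centerMass] using this
  -- the affine span is everything
  have haff : affineSpan ℝ (Set.range ξ) = ⊤ := by
    have h0mem : (0 : E) ∈ affineSpan ℝ (Set.range ξ) := by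
      have hclosed : IsClosed (affineSpan ℝ (Set.range ξ) : Set E) :=
        (affineSpan ℝ (Set.range ξ)).closed_of_finiteDimensional
      have : closure C ⊆ (affineSpan ℝ (Set.range ξ) : Set E) := by
        rw [← hclosed.closure_eq]
        exact closure_mono (convexHull_subset_affineSpan _)
      exact this hcl
    have hne : (affineSpan ℝ (Set.range ξ) : Set E).Nonempty := ⟨0, h0mem⟩
    rw [← AffineSubspace.direction_eq_top_iff_of_nonempty hne]
    rw [eq_top_iff, ← hsp, Submodule.span_le]
    rintro _ ⟨i, rfl⟩
    simpa using AffineSubspace.vsub_mem_direction (subset_affineSpan ℝ (Set.range ξ) (Set.mem_range_self i)) h0mem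
  have hint : (interior C).Nonempty := by
    rw [hC.interior_nonempty_iff_affineSpan_eq_top, hCdef, affineSpan_convexHull]
    exact haff
  -- 0 is in the interior (supporting hyperplane argument)
  by_cases h0 : (0 : E) ∈ interior C
  · exact interior_subset h0
  exfalso
  obtain ⟨f, u, hfu, hu0⟩ := geometric_hahn_banach_open (hC.interior) isOpen_interior
    (convex_singleton (0 : E)) (Set.disjoint_singleton_right.mpr h0)
  have hu0' : u ≤ 0 := by simpa using hu0 0 rfl
  obtain ⟨x₀, hx₀⟩ := hint
  have hfx₀ : f x₀ < 0 := lt_of_lt_of_le (hfu x₀ hx₀) hu0'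
  -- every point of C has f z ≤ 0
  have hle : ∀ z ∈ C, f z ≤ 0 := by
    intro z hz
    set p : ℕ → E := fun n =>
      (1 / ((n : ℝ) + 1)) • x₀ + (1 - 1 / ((n : ℝ) + 1)) • z with hp
    have hmem : ∀ n, p n ∈ interior C := by
      intro n
      refine hC.combo_interior_self_mem_interior (a := (1 / ((n : ℝ) + 1)))
        (b := 1 - 1 / ((n : ℝ) + 1)) hx₀ hz ?_ ?_ (by ring)
      · positivity
      · have : (1 / ((n : ℝ) + 1)) ≤ 1 := by
          rw [div_le_one (by positivity)]; linarith
        linarith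
    have hptend : Filter.Tendsto p Filter.atTop (nhds z) := by
      have h0' : Filter.Tendsto (fun n : ℕ => (1 / (n + 1) : ℝ)) Filter.atTop (nhds 0) :=
        tendsto_one_div_add_atTop_nhds_zero_nat
      have h1 : Filter.Tendsto p Filter.atTop (nhds ((0 : ℝ) • x₀ + ((1 : ℝ) - 0) • z)) :=
        (h0'.smul_const x₀).add
          (((tendsto_const_nhds :
              Filter.Tendsto (fun _ : ℕ => (1 : ℝ)) Filter.atTop (nhds 1)).sub h0').smul_const z)
      simpa using h1
    refine le_of_tendsto ((f.continuous.tendsto z).comp hptend) ?_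
    exact Filter.Eventually.of_forall fun n => le_of_lt (lt_of_lt_of_le (hfu _ (hmem n)) hu0')
  -- f vanishes on all ξ i
  have hsumf : HasSum (fun i => α i * f (ξ i)) 0 := by
    have := hzero.mapL f
    simpa using this
  have hker : ∀ i, f (ξ i) = 0 := by
    intro i
    have hterm : ∀ j, α j * f (ξ j) ≤ 0 := fun j =>
      mul_nonpos_of_nonneg_of_nonpos (hα j).le (hle _ (subset_convexHull ℝ _ ⟨j, rfl⟩))
    have hneg : HasSum (fun j => -(α j * f (ξ j))) 0 := by simpa using hsumf.neg
    have h1 : -(α i * f (ξ i)) ≤ 0 :=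
      le_hasSum hneg i (fun j _ => by simpa using hterm j)
    have : α i * f (ξ i) = 0 := le_antisymm (hterm i) (by linarith)
    exact (mul_eq_zero.mp this).resolve_left (hα i).ne'
  -- contradiction: f = 0 on span = ⊤
  have : Submodule.span ℝ (Set.range ξ) ≤ LinearMap.ker (f : E →ₗ[ℝ] ℝ) := by
    rw [Submodule.span_le]
    rintro _ ⟨i, rfl⟩
    exact hker i
  rw [hsp, top_le_iff] at this
  have hx₀ker : x₀ ∈ LinearMap.ker (f : E →ₗ[ℝ] ℝ) := by rw [this]; trivial
  have : f x₀ = 0 := LinearMap.mem_ker.mp hx₀ker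
  linarith

end Aux

theorem caratheodory_positive_combination {d : ℕ} (hd : 0 < d)
    {I : Type*} [Countable I] [Nonempty I]
    (ξ : I → EuclideanSpace ℝ (Fin d)) (α : I → ℝ)
    (hξ0 : ∀ i, 0 < ‖ξ i‖) (hξ1 : ∀ i, ‖ξ i‖ ≤ 1)
    (hα : ∀ i, 0 < α i) (hαsum : Summable α) (hα1 : ∑' i, α i ≤ 1)
    (hzero : HasSum (fun i => α i • ξ i) 0) :
    ∃ (m : ℕ) (idx : Fin m → I) (β : Fin m → ℝ),
      1 ≤ m ∧ m ≤ d + 1 ∧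
      (∀ k, 0 < β k ∧ β k ≤ α (idx k)) ∧
      ∑ k, β k • ξ (idx k) = 0 := by
  classical
  set W : Submodule ℝ (EuclideanSpace ℝ (Fin d)) := Submodule.span ℝ (Set.range ξ) with hW
  set ξ' : I → W := fun i => ⟨ξ i, Submodule.subset_span ⟨i, rfl⟩⟩ with hξ'
  -- transfer the HasSum to W
  have hsummable : Summable (fun i => α i • ξ' i) := by
    refine Summable.of_norm_bounded hαsum fun i => ?_
    have : ‖α i • ξ' i‖ = α i * ‖ξ i‖ := by
      rw [norm_smul, Real.norm_of_nonneg (hα i).le]; rfl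
    rw [this]
    calc α i * ‖ξ i‖ ≤ α i * 1 := by
          exact mul_le_mul_of_nonneg_left (hξ1 i) (hα i).le
      _ = α i := mul_one _
  obtain ⟨w, hw⟩ := hsummable
  have hwE : HasSum (fun i => α i • ξ i) (w : EuclideanSpace ℝ (Fin d)) := by
    have := hw.mapL W.subtypeL
    simpa using this
  have hw0 : w = 0 := by
    have : (w : EuclideanSpace ℝ (Fin d)) = 0 := hwE.unique hzero
    exact Subtype.ext this
  rw [hw0] at hw
  -- span of ξ' is ⊤ in W
  have hsp : Submodule.span ℝ (Set.range ξ') = ⊤ := by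
    apply Submodule.map_injective_of_injective W.injective_subtype
    rw [Submodule.map_span, Submodule.map_top, Submodule.range_subtype]
    rw [← Set.range_comp]
    exact hW.symm
  have hmem : (0 : W) ∈ convexHull ℝ (Set.range ξ') :=
    aux_mem_convexHull ξ' α hα hαsum hsp hw
  -- map back to E
  have hmemE : (0 : EuclideanSpace ℝ (Fin d)) ∈ convexHull ℝ (Set.range ξ) := by
    have himg := Set.mem_image_of_mem W.subtype hmem
    rw [LinearMap.image_convexHull, ← Set.range_comp] at himg
    have h' : (0 : EuclideanSpace ℝ (Fin d)) ∈ convexHull ℝ (Set.range (Subtype.val ∘ ξ')) := by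
      simpa using himg
    exact h'
  -- Carathéodory
  obtain ⟨ι, hfin, z, v, hzs, hzaff, hvpos, hvsum, hvz⟩ :=
    eq_pos_convex_span_of_mem_convexHull hmemE
  have hne : Nonempty ι := by
    by_contra h
    rw [not_nonempty_iff] at h
    simp [Finset.univ_eq_empty] at hvsum
  set m := Fintype.card ι with hm
  have hm1 : 1 ≤ m := Fintype.card_pos
  have hmd : m ≤ d + 1 := by
    have h1 := hzaff.card_le_finrank_succ
    have h2 : Module.finrank ℝ (vectorSpan ℝ (Set.range z)) ≤
        Module.finrank ℝ (EuclideanSpace ℝ (Fin d)) :=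
      Submodule.finrank_le _
    have h3 : Module.finrank ℝ (EuclideanSpace ℝ (Fin d)) = d := finrank_euclideanSpace_fin
    omega
  set e : Fin m ≃ ι := (Fintype.equivFin ι).symm with he
  have hidx : ∀ k : Fin m, ∃ i : I, ξ i = z (e k) := fun k => hzs (Set.mem_range_self (e k))
  choose idx hidxeq using hidx
  have hne' : (Finset.univ : Finset (Fin m)).Nonempty := by
    refine Finset.univ_nonempty_iff.mpr ?_
    exact Fin.pos_iff_nonempty.mp hm1
  set c : ℝ := Finset.univ.inf' hne' (fun k => α (idx k)) with hc
  have hcpos : 0 < c := by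
    rw [hc, Finset.lt_inf'_iff]
    exact fun k _ => hα (idx k)
  refine ⟨m, idx, fun k => c * v (e k), hm1, hmd, fun k => ?_, ?_⟩
  · constructor
    · exact mul_pos hcpos (hvpos (e k))
    · have hv1 : v (e k) ≤ 1 := by
        rw [← hvsum]
        exact Finset.single_le_sum (fun i _ => (hvpos i).le) (Finset.mem_univ _)
      calc c * v (e k) ≤ c * 1 := mul_le_mul_of_nonneg_left hv1 hcpos.le
        _ = c := mul_one _
        _ ≤ α (idx k) := Finset.inf'_le _ (Finset.mem_univ k)
  · show ∑ k : Fin m, (c * v (e k)) • ξ (idx k) = 0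
    have : ∑ k : Fin m, (c * v (e k)) • ξ (idx k) = c • ∑ k : Fin m, v (e k) • z (e k) := by
      rw [Finset.smul_sum]
      refine Finset.sum_congr rfl fun k _ => ?_
      rw [hidxeq k, mul_smul]
    rw [this, show ∑ k : Fin m, v (e k) • z (e k) = ∑ i : ι, v i • z i from
      Equiv.sum_comp e fun i => v i • z i, hvz, smul_zero]
end

section
/- Let $D\subseteq[0,1]$ have positive Lebesgue measure and let $f\in L_1(D;\mathbb{R}^d)$ satisfy $\int_D f\,d\lambda=0$. Then there exist constants $\alpha,\beta_{\min},\beta_{\max},\tau>0$ such that for every non-zero $v\in\mathrm{Span}(\sigma(f))$ one has $\lambda\big(\{t\in D: \tfrac{(v,f(t))}{\|v\|\,\|f(t)\|}>\alpha\}\cap\{t: \beta_{\min}<\|f(t)\|<\beta_{\max}\}\big)>\tau$. -/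
open MeasureTheory RealInnerProductSpace

/-- The essential range of `f` with respect to the measure `μ`. -/
def essRange {E : Type*} [TopologicalSpace E] (μ : Measure ℝ) (f : ℝ → E) : Set E :=
  {r | ∀ U ∈ nhds r, 0 < μ (f ⁻¹' U)}

lemma ae_mem_essRange {d : ℕ} (μ : Measure ℝ) (f : ℝ → EuclideanSpace ℝ (Fin d)) :
    ∀ᵐ t ∂μ, f t ∈ essRange μ f := by
  obtain ⟨B, hBc, -, hBb⟩ := TopologicalSpace.exists_countable_basis (EuclideanSpace ℝ (Fin d))
  set N : Set (Set (EuclideanSpace ℝ (Fin d))) := {U ∈ B | μ (f ⁻¹' U) = 0} with hN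
  have hNc : N.Countable := hBc.mono (Set.sep_subset _ _)
  have hZ : μ (⋃ U ∈ N, f ⁻¹' U) = 0 := (measure_biUnion_null_iff hNc).2 fun U hU => hU.2
  rw [ae_iff]
  refine measure_mono_null (fun t ht => ?_) hZ
  simp only [Set.mem_setOf_eq, essRange] at ht
  push_neg at ht
  obtain ⟨U, hU, hUm⟩ := ht
  have hU0 : μ (f ⁻¹' U) = 0 := le_antisymm hUm zero_le
  obtain ⟨V, hVB, htV, hVU⟩ := hBb.mem_nhds_iff.1 hU
  have hV0 : μ (f ⁻¹' V) = 0 := measure_mono_null (Set.preimage_mono hVU) hU0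
  exact Set.mem_biUnion ⟨hVB, hV0⟩ htV

lemma exists_pos_inner {d : ℕ} (μ : Measure ℝ) (f : ℝ → EuclideanSpace ℝ (Fin d))
    (hf : Integrable f μ) (hmean : ∫ x, f x ∂μ = 0)
    (v : EuclideanSpace ℝ (Fin d)) (hv : v ∈ Submodule.span ℝ (essRange μ f)) (hv0 : v ≠ 0) :
    ∃ r ∈ essRange μ f, (0:ℝ) < ⟪v, r⟫ := by
  by_contra hcon
  push_neg at hcon
  have h1 : ∀ᵐ t ∂μ, ⟪v, f t⟫ ≤ 0 := (ae_mem_essRange μ f).mono fun t ht => hcon _ ht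
  have hint : Integrable (fun t => ⟪v, f t⟫) μ := Integrable.const_inner v hf
  have hzero : (fun t => -⟪v, f t⟫) =ᵐ[μ] 0 := by
    refine (integral_eq_zero_iff_of_nonneg_ae ?_ hint.neg).1 ?_
    · exact h1.mono fun t ht => by simpa using ht
    · show ∫ x, -(inner ℝ v (f x) : ℝ) ∂μ = 0
      rw [integral_neg, integral_inner hf, hmean, inner_zero_right, neg_zero]
  have h2 : ∀ᵐ t ∂μ, ⟪v, f t⟫ = 0 := hzero.mono fun t ht => by
    simpa [neg_eq_zero] using ht
  have h3 : ∀ r ∈ essRange μ f, ⟪v, r⟫ = 0 := by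
    intro r hr
    by_contra hne
    have hopen : IsOpen {w : EuclideanSpace ℝ (Fin d) | ⟪v, w⟫ ≠ 0} := by
      have hc : Continuous fun w : EuclideanSpace ℝ (Fin d) => ⟪v, w⟫ :=
        continuous_const.inner continuous_id
      exact isOpen_compl_iff.2 (isClosed_eq hc continuous_const)
    have hpos := hr _ (hopen.mem_nhds hne)
    have hnull : μ (f ⁻¹' {w | ⟪v, w⟫ ≠ 0}) = 0 := by
      rw [ae_iff] at h2
      exact measure_mono_null (fun t ht => ht) h2
    exact absurd hnull hpos.ne'
  have hker : v ∈ LinearMap.ker (innerₛₗ ℝ v) := by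
    have hle : Submodule.span ℝ (essRange μ f) ≤ LinearMap.ker (innerₛₗ ℝ v) :=
      Submodule.span_le.2 fun r hr => by simpa [LinearMap.mem_ker] using h3 r hr
    exact hle hv
  rw [LinearMap.mem_ker, innerₛₗ_apply_apply] at hker
  exact hv0 (inner_self_eq_zero.1 hker)

theorem obtaining_positive_constants {d : ℕ}
    (D : Set ℝ) (hD : MeasurableSet D) (hDpos : 0 < volume D) (hD1 : D ⊆ Set.Icc 0 1)
    (f : ℝ → EuclideanSpace ℝ (Fin d))
    (hf : Integrable f (volume.restrict D))
    (hmean : ∫ x in D, f x = 0) :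
    ∃ α βmin βmax τ : ℝ, 0 < α ∧ 0 < βmin ∧ 0 < βmax ∧ 0 < τ ∧
      ∀ v ∈ Submodule.span ℝ (essRange (volume.restrict D) f), v ≠ 0 →
        ENNReal.ofReal τ <
          volume.restrict D
            ({t | α < (inner ℝ v (f t) : ℝ) / (‖v‖ * ‖f t‖)} ∩
              {t | βmin < ‖f t‖ ∧ ‖f t‖ < βmax}) := by
  classical
  set μ := volume.restrict D with hμdef
  have hμfin : μ Set.univ < ⊤ := by
    rw [hμdef, Measure.restrict_apply_univ]
    calc volume D ≤ volume (Set.Icc (0:ℝ) 1) := measure_mono hD1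
      _ < ⊤ := by simp
  set R := essRange μ f with hRdef
  set S : Set (EuclideanSpace ℝ (Fin d)) :=
    {v | v ∈ Submodule.span ℝ R ∧ ‖v‖ = 1} with hSdef
  have key : ∀ v ∈ S, ∃ α b1 b2 τ : ℝ, 0 < α ∧ 0 < b1 ∧ 0 < b2 ∧ 0 < τ ∧
      ∀ v' : EuclideanSpace ℝ (Fin d), ‖v'‖ = 1 → ‖v' - v‖ < α →
        ENNReal.ofReal τ < μ ({t | α < ⟪v', f t⟫ / (‖v'‖ * ‖f t‖)} ∩
          {t | b1 < ‖f t‖ ∧ ‖f t‖ < b2}) := by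
    rintro v ⟨hvspan, hvnorm⟩
    obtain ⟨r, hrR, hc⟩ := exists_pos_inner μ f hf hmean v hvspan
      (by rintro rfl; simp at hvnorm)
    set c : ℝ := ⟪v, r⟫ with hcdef
    have hcb : c ≤ ‖r‖ := by
      calc c ≤ ‖v‖ * ‖r‖ := real_inner_le_norm v r
        _ = ‖r‖ := by rw [hvnorm, one_mul]
    set b : ℝ := ‖r‖ with hbdef
    have hb : 0 < b := lt_of_lt_of_le hc hcb
    set ε : ℝ := c / 2 with hεdef
    have hε : 0 < ε := by positivity
    have hεc : ε < c := by simp only [hεdef]; linarith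
    have hεb : ε < b := by simp only [hεdef]; linarith
    set α0 : ℝ := (c - ε) / (b + ε) with hα0def
    have hα0 : 0 < α0 := div_pos (by linarith) (by linarith)
    have hw : ∀ w : EuclideanSpace ℝ (Fin d), ‖w - r‖ < ε →
        (b - ε < ‖w‖ ∧ ‖w‖ < b + ε ∧ α0 * ‖w‖ < ⟪v, w⟫) := by
      intro w hwr
      have h1 : |‖w‖ - ‖r‖| ≤ ‖w - r‖ := abs_norm_sub_norm_le w r
      rw [abs_le] at h1
      have hlow : b - ε < ‖w‖ := by rw [hbdef]; linarith [h1.1]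
      have hup : ‖w‖ < b + ε := by rw [hbdef] at *; linarith [h1.2]
      have hiw : c - ε < ⟪v, w⟫ := by
        have h2 : ⟪v, r - w⟫ ≤ ‖v‖ * ‖r - w‖ := real_inner_le_norm _ _
        rw [inner_sub_right, hvnorm, one_mul] at h2
        have hrw : ‖r - w‖ < ε := by rwa [norm_sub_rev] at hwr
        have : c - ⟪v, w⟫ ≤ ‖r - w‖ := h2
        linarith
      refine ⟨hlow, hup, ?_⟩
      have hlt : α0 * ‖w‖ < α0 * (b + ε) := mul_lt_mul_of_pos_left hup hα0
      have heq : α0 * (b + ε) = c - ε := by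
        rw [hα0def]; exact div_mul_cancel₀ _ (by linarith)
      linarith
    have hm : 0 < μ (f ⁻¹' Metric.ball r ε) := hrR _ (Metric.ball_mem_nhds r hε)
    have hmne : μ (f ⁻¹' Metric.ball r ε) ≠ ⊤ :=
      (lt_of_le_of_lt (measure_mono (Set.subset_univ _)) hμfin).ne
    set τ : ℝ := (μ (f ⁻¹' Metric.ball r ε)).toReal / 2 with hτdef
    have htpos := ENNReal.toReal_pos hm.ne' hmne
    have hτ : 0 < τ := by positivity
    refine ⟨α0 / 2, b - ε, b + ε, τ, by positivity, by linarith, by linarith, hτ, ?_⟩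
    intro v' hv'norm hv'close
    have hsub : f ⁻¹' Metric.ball r ε ⊆
        ({t | α0/2 < ⟪v', f t⟫ / (‖v'‖ * ‖f t‖)} ∩
          {t | b - ε < ‖f t‖ ∧ ‖f t‖ < b + ε}) := by
      intro t ht
      have hwball : ‖f t - r‖ < ε := by
        simpa [Metric.mem_ball, dist_eq_norm] using ht
      obtain ⟨hlow, hup, hiv⟩ := hw (f t) hwball
      have hwpos : 0 < ‖f t‖ := lt_of_lt_of_le (by linarith) hlow.le
      refine ⟨?_, hlow, hup⟩
      show α0/2 < ⟪v', f t⟫ / (‖v'‖ * ‖f t‖)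
      rw [hv'norm, one_mul, lt_div_iff₀ hwpos]
      have hdiff : ⟪v, f t⟫ - ⟪v', f t⟫ ≤ ‖v' - v‖ * ‖f t‖ := by
        have h := real_inner_le_norm (v - v') (f t)
        rw [inner_sub_left] at h
        calc ⟪v, f t⟫ - ⟪v', f t⟫ ≤ ‖v - v'‖ * ‖f t‖ := h
          _ = ‖v' - v‖ * ‖f t‖ := by rw [norm_sub_rev]
      have hsm : ‖v' - v‖ * ‖f t‖ < (α0/2) * ‖f t‖ :=
        mul_lt_mul_of_pos_right hv'close hwpos
      linarith
    calc ENNReal.ofReal τ < μ (f ⁻¹' Metric.ball r ε) := by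
          conv_rhs => rw [← ENNReal.ofReal_toReal hmne]
          exact (ENNReal.ofReal_lt_ofReal_iff htpos).2 (by rw [hτdef]; linarith)
      _ ≤ _ := measure_mono hsub
  by_cases hSne : S.Nonempty
  · choose! αf b1f b2f τf hαf hb1f hb2f hτf hmainf using key
    have hScomp : IsCompact S := by
      have h1 : S = (Submodule.span ℝ R : Set (EuclideanSpace ℝ (Fin d))) ∩ Metric.sphere 0 1 := by
        ext w
        simp [hSdef, Set.mem_inter_iff, mem_sphere_iff_norm]
      rw [h1]
      exact (isCompact_sphere 0 1).inter_left (Submodule.closed_of_finiteDimensional _)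
    have hcover : S ⊆ ⋃ v : S, Metric.ball (v : EuclideanSpace ℝ (Fin d)) (αf v) := by
      intro v hv
      exact Set.mem_iUnion.2 ⟨⟨v, hv⟩, Metric.mem_ball_self (hαf v hv)⟩
    obtain ⟨F, hF⟩ := hScomp.elim_finite_subcover _ (fun v : S => Metric.isOpen_ball) hcover
    obtain ⟨v0, hv0S⟩ := hSne
    have hF0 : F.Nonempty := by
      obtain ⟨w, hwF, -⟩ := Set.mem_iUnion₂.1 (hF hv0S)
      exact ⟨w, hwF⟩
    refine ⟨F.inf' hF0 (fun v => αf v), F.inf' hF0 (fun v => b1f v), F.sup' hF0 (fun v => b2f v),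
      F.inf' hF0 (fun v => τf v), ?_, ?_, ?_, ?_, ?_⟩
    · exact (Finset.lt_inf'_iff hF0).2 fun v _ => hαf v v.2
    · exact (Finset.lt_inf'_iff hF0).2 fun v _ => hb1f v v.2
    · obtain ⟨w, hwF⟩ := id hF0
      exact (Finset.lt_sup'_iff hF0).2 ⟨w, hwF, hb2f w w.2⟩
    · exact (Finset.lt_inf'_iff hF0).2 fun v _ => hτf v v.2
    · intro v hvspan hvne
      set u : EuclideanSpace ℝ (Fin d) := ‖v‖⁻¹ • v with hu
      have hvnorm : ‖v‖ ≠ 0 := norm_ne_zero_iff.2 hvne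
      have hunorm : ‖u‖ = 1 := by
        rw [hu, norm_smul, norm_inv, norm_norm, inv_mul_cancel₀ hvnorm]
      have huS : u ∈ S := ⟨Submodule.smul_mem _ _ hvspan, hunorm⟩
      obtain ⟨w, hwF, hwball⟩ := Set.mem_iUnion₂.1 (hF huS)
      have hclose : ‖u - (w : EuclideanSpace ℝ (Fin d))‖ < αf w := by
        rw [← dist_eq_norm]
        exact hwball
      have hmain := hmainf w w.2 u hunorm hclose
      have hquot : ∀ w' : EuclideanSpace ℝ (Fin d),
          ⟪u, w'⟫ / (‖u‖ * ‖w'‖) = ⟪v, w'⟫ / (‖v‖ * ‖w'‖) := by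
        intro w'
        rw [hunorm, one_mul, hu, real_inner_smul_left, ← div_eq_inv_mul, div_div]
      have hsubset : ({t | αf w < ⟪u, f t⟫ / (‖u‖ * ‖f t‖)} ∩
            {t | b1f w < ‖f t‖ ∧ ‖f t‖ < b2f w}) ⊆
          ({t | F.inf' hF0 (fun v => αf v) < (inner ℝ v (f t) : ℝ) / (‖v‖ * ‖f t‖)} ∩
            {t | F.inf' hF0 (fun v => b1f v) < ‖f t‖ ∧ ‖f t‖ < F.sup' hF0 (fun v => b2f v)}) := by
        rintro t ⟨ht1, ht2, ht3⟩
        refine ⟨?_, ?_, ?_⟩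
        · have := ht1
          rw [Set.mem_setOf_eq, hquot] at this
          exact lt_of_le_of_lt (Finset.inf'_le (fun v : S => αf v) hwF) this
        · exact lt_of_le_of_lt (Finset.inf'_le (fun v : S => b1f v) hwF) ht2
        · exact lt_of_lt_of_le ht3 (Finset.le_sup' (fun v : S => b2f v) hwF)
      calc ENNReal.ofReal (F.inf' hF0 (fun v => τf v)) ≤ ENNReal.ofReal (τf w) :=
            ENNReal.ofReal_le_ofReal (Finset.inf'_le (fun v : S => τf v) hwF)
        _ < _ := hmain
        _ ≤ _ := measure_mono hsubset
  · refine ⟨1, 1, 1, 1, one_pos, one_pos, one_pos, one_pos, fun v hv hvne => ?_⟩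
    exfalso
    have hvnorm : ‖v‖ ≠ 0 := norm_ne_zero_iff.2 hvne
    exact hSne ⟨‖v‖⁻¹ • v, Submodule.smul_mem _ _ hv,
      by rw [norm_smul, norm_inv, norm_norm, inv_mul_cancel₀ hvnorm]⟩
end

section
/- Let $\{T_n\}$ be a sequence of mod-0 measure preserving automorphisms of $[0,1]$ such that $T_n\to T$ and $T_n^{-1}\to S$ in measure. Then $T$ and $S$ are mod-0 measure preserving automorphisms of $[0,1]$ and $S=T^{-1}$ almost everywhere. -/
open MeasureTheory Filter
open scoped NNReal ENNReal Topology

/-- Lebesgue measure restricted to the unit interval. -/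
noncomputable def μ01 : Measure ℝ := volume.restrict (Set.Icc 0 1)

instance : IsFiniteMeasure μ01 := by
  constructor
  simp [μ01, Real.volume_Icc]

private lemma bcf_bound (f : BoundedContinuousFunction (ℝ × ℝ) ℝ≥0) (y : ℝ × ℝ) :
    ((f y : ℝ≥0) : ℝ≥0∞) ≤ (nndist f 0 : ℝ≥0∞) := by
  apply ENNReal.coe_le_coe.2
  have h := BoundedContinuousFunction.nndist_coe_le_nndist (f := f) (g := 0) y
  simpa using h

private lemma key_lemma {μ : Measure ℝ} [IsFiniteMeasure μ]
    (A B : ℕ → ℝ → ℝ) (A' B' : ℝ → ℝ)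
    (hAm : ∀ n, Measurable (A n)) (hBm : ∀ n, Measurable (B n))
    (hA'm : Measurable A') (hB'm : Measurable B')
    (hA : ∀ n, MeasurePreserving (A n) μ μ)
    (hinv : ∀ n, ∀ᵐ x ∂μ, B n (A n x) = x)
    (hAc : TendstoInMeasure μ A atTop A')
    (hBc : TendstoInMeasure μ B atTop B') :
    Measure.map (fun x => (A' x, x)) μ = Measure.map (fun y => (y, B' y)) μ := by
  obtain ⟨ns₁, hns₁, hae₁⟩ := hAc.exists_seq_tendsto_ae
  have hBc' : TendstoInMeasure μ (fun k => B (ns₁ k)) atTop B' :=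
    fun ε hε => (hBc ε hε).comp hns₁.tendsto_atTop
  obtain ⟨ns₂, hns₂, hae₂⟩ := hBc'.exists_seq_tendsto_ae
  set ns : ℕ → ℕ := fun k => ns₁ (ns₂ k) with hns
  have hae₁' : ∀ᵐ x ∂μ, Filter.Tendsto (fun k => A (ns k) x) atTop (𝓝 (A' x)) :=
    hae₁.mono fun x hx => hx.comp hns₂.tendsto_atTop
  apply ext_of_forall_lintegral_eq_of_IsFiniteMeasure
  intro f
  have hfm : Measurable fun p : ℝ × ℝ => ((f p : ℝ≥0) : ℝ≥0∞) :=
    measurable_coe_nnreal_ennreal.comp f.continuous.measurable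
  have hmA' : Measurable fun x : ℝ => (A' x, x) := hA'm.prodMk measurable_id
  have hmB' : Measurable fun y : ℝ => (y, B' y) := measurable_id.prodMk hB'm
  rw [lintegral_map hfm hmA', lintegral_map hfm hmB']
  have hbound_fin : ∫⁻ _x, (nndist f 0 : ℝ≥0∞) ∂μ ≠ ⊤ := by
    rw [lintegral_const]
    exact ENNReal.mul_ne_top ENNReal.coe_ne_top (measure_ne_top μ _)
  -- step 1 : lintegrals of f (A (ns k) x, x) tend to lintegral of f (A' x, x)
  have step1 : Filter.Tendsto (fun k => ∫⁻ x, ((f (A (ns k) x, x) : ℝ≥0) : ℝ≥0∞) ∂μ)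
      atTop (𝓝 (∫⁻ x, ((f (A' x, x) : ℝ≥0) : ℝ≥0∞) ∂μ)) := by
    apply tendsto_lintegral_of_dominated_convergence (fun _ => (nndist f 0 : ℝ≥0∞))
    · exact fun k => hfm.comp ((hAm (ns k)).prodMk measurable_id)
    · exact fun k => Filter.Eventually.of_forall fun x => bcf_bound f _
    · exact hbound_fin
    · refine hae₁'.mono fun x hx => ?_
      have h1 : Filter.Tendsto (fun k => (A (ns k) x, x)) atTop (𝓝 (A' x, x)) :=
        hx.prodMk_nhds tendsto_const_nhds
      exact (ENNReal.continuous_coe.tendsto _).comp ((f.continuous.tendsto _).comp h1)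
  -- step 2 : for each n, lintegral of f (A n x, x) equals lintegral of f (y, B n y)
  have step2 : ∀ n, ∫⁻ x, ((f (A n x, x) : ℝ≥0) : ℝ≥0∞) ∂μ
      = ∫⁻ y, ((f (y, B n y) : ℝ≥0) : ℝ≥0∞) ∂μ := by
    intro n
    have h1 : ∫⁻ x, ((f (A n x, x) : ℝ≥0) : ℝ≥0∞) ∂μ
        = ∫⁻ x, ((f (A n x, B n (A n x)) : ℝ≥0) : ℝ≥0∞) ∂μ := by
      refine lintegral_congr_ae ((hinv n).mono fun x hx => ?_)
      simp only [hx]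
    rw [h1]
    exact (hA n).lintegral_comp (hfm.comp (measurable_id.prodMk (hBm n)))
  -- step 3 : lintegrals of f (y, B (ns k) y) tend to lintegral of f (y, B' y)
  have step3 : Filter.Tendsto (fun k => ∫⁻ y, ((f (y, B (ns k) y) : ℝ≥0) : ℝ≥0∞) ∂μ)
      atTop (𝓝 (∫⁻ y, ((f (y, B' y) : ℝ≥0) : ℝ≥0∞) ∂μ)) := by
    apply tendsto_lintegral_of_dominated_convergence (fun _ => (nndist f 0 : ℝ≥0∞))
    · exact fun k => hfm.comp (measurable_id.prodMk (hBm (ns k)))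
    · exact fun k => Filter.Eventually.of_forall fun x => bcf_bound f _
    · exact hbound_fin
    · refine hae₂.mono fun y hy => ?_
      have h1 : Filter.Tendsto (fun k => (y, B (ns k) y)) atTop (𝓝 (y, B' y)) :=
        tendsto_const_nhds.prodMk_nhds hy
      exact (ENNReal.continuous_coe.tendsto _).comp ((f.continuous.tendsto _).comp h1)
  simp_rw [step2] at step1
  exact tendsto_nhds_unique step1 step3

theorem limit_of_measure_preserving_in_measure
    (T S : ℕ → ℝ → ℝ) (Tl Sl : ℝ → ℝ)
    (hTm : ∀ n, Measurable (T n)) (hSm : ∀ n, Measurable (S n))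
    (hT : ∀ n, MeasurePreserving (T n) μ01 μ01)
    (hS : ∀ n, MeasurePreserving (S n) μ01 μ01)
    (hinv₁ : ∀ n, ∀ᵐ x ∂μ01, S n (T n x) = x)
    (hinv₂ : ∀ n, ∀ᵐ x ∂μ01, T n (S n x) = x)
    (hTl : TendstoInMeasure μ01 T atTop Tl)
    (hSl : TendstoInMeasure μ01 S atTop Sl) :
    ∃ T' S' : ℝ → ℝ,
      T' =ᵐ[μ01] Tl ∧ S' =ᵐ[μ01] Sl ∧
      MeasurePreserving T' μ01 μ01 ∧ MeasurePreserving S' μ01 μ01 ∧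
      (∀ᵐ x ∂μ01, S' (T' x) = x) ∧ (∀ᵐ x ∂μ01, T' (S' x) = x) := by
  have hTl_ae : AEMeasurable Tl μ01 := hTl.aemeasurable (fun n => (hTm n).aemeasurable)
  have hSl_ae : AEMeasurable Sl μ01 := hSl.aemeasurable (fun n => (hSm n).aemeasurable)
  set T' : ℝ → ℝ := hTl_ae.mk Tl with hT'def
  set S' : ℝ → ℝ := hSl_ae.mk Sl with hS'def
  have hT'm : Measurable T' := hTl_ae.measurable_mk
  have hS'm : Measurable S' := hSl_ae.measurable_mk
  have hTc' : TendstoInMeasure μ01 T atTop T' :=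
    TendstoInMeasure.congr (fun _ => EventuallyEq.rfl) hTl_ae.ae_eq_mk hTl
  have hSc' : TendstoInMeasure μ01 S atTop S' :=
    TendstoInMeasure.congr (fun _ => EventuallyEq.rfl) hSl_ae.ae_eq_mk hSl
  have E₁ := key_lemma T S T' S' hTm hSm hT'm hS'm hT hinv₁ hTc' hSc'
  have E₂ := key_lemma S T S' T' hSm hTm hS'm hT'm hS hinv₂ hSc' hTc'
  -- measure preserving from the measure identities
  have hmp : ∀ (F G : ℝ → ℝ), Measurable F → Measurable G →
      Measure.map (fun x => (F x, x)) μ01 = Measure.map (fun y => (y, G y)) μ01 →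
      MeasurePreserving F μ01 μ01 := by
    intro F G hFm hGm hE
    refine ⟨hFm, ?_⟩
    have hmF : Measurable fun x : ℝ => (F x, x) := hFm.prodMk measurable_id
    have hmG : Measurable fun y : ℝ => (y, G y) := measurable_id.prodMk hGm
    have h1 : Measure.map Prod.fst (Measure.map (fun x => (F x, x)) μ01)
        = Measure.map F μ01 := by
      rw [Measure.map_map measurable_fst hmF]
      rfl
    have h2 : Measure.map Prod.fst (Measure.map (fun y => (y, G y)) μ01)
        = μ01 := by
      rw [Measure.map_map measurable_fst hmG]
      exact Measure.map_id
    rw [← h1, hE, h2]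
  have hmpT : MeasurePreserving T' μ01 μ01 := hmp T' S' hT'm hS'm E₁
  have hmpS : MeasurePreserving S' μ01 μ01 := hmp S' T' hS'm hT'm E₂
  -- a.e. inverse from the measure identities
  have hainv : ∀ (F G : ℝ → ℝ), Measurable F → Measurable G →
      Measure.map (fun x => (F x, x)) μ01 = Measure.map (fun y => (y, G y)) μ01 →
      (∀ᵐ x ∂μ01, G (F x) = x) := by
    intro F G hFm hGm hE
    have hmF : Measurable fun x : ℝ => (F x, x) := hFm.prodMk measurable_id
    have hmG : Measurable fun y : ℝ => (y, G y) := measurable_id.prodMk hGm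
    have hset : MeasurableSet {p : ℝ × ℝ | G p.1 = p.2} :=
      measurableSet_eq_fun (hGm.comp measurable_fst) measurable_snd
    have h1 := Measure.map_apply (μ := μ01) hmF hset
    have h2 := Measure.map_apply (μ := μ01) hmG hset
    rw [hE, h2] at h1
    have hpre1 : (fun x => (F x, x)) ⁻¹' {p : ℝ × ℝ | G p.1 = p.2}
        = {x | G (F x) = x} := rfl
    have hpre2 : (fun y => (y, G y)) ⁻¹' {p : ℝ × ℝ | G p.1 = p.2}
        = Set.univ := by
      ext y; simp
    rw [hpre1, hpre2] at h1
    have hsm : MeasurableSet {x | G (F x) = x} :=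
      measurableSet_eq_fun (hGm.comp hFm) measurable_id
    have hcompl : μ01 {x | G (F x) = x}ᶜ = 0 := by
      rw [measure_compl hsm (measure_ne_top _ _), h1, tsub_self]
    rw [ae_iff]
    exact hcompl
  have hinvTS : ∀ᵐ x ∂μ01, S' (T' x) = x := hainv T' S' hT'm hS'm E₁
  have hinvST : ∀ᵐ x ∂μ01, T' (S' x) = x := hainv S' T' hS'm hT'm E₂
  exact ⟨T', S', hTl_ae.ae_eq_mk.symm, hSl_ae.ae_eq_mk.symm, hmpT, hmpS, hinvTS, hinvST⟩
end

section
/- For even $d$, let $x_k\in\mathbb{R}^d$ ($k=1,\dots,d$) be given by $(x_k)_i=\delta_{ki}-\frac{1}{d}$ (vertices of a regular simplex centered at the origin). Then $\|x_k\|^2=\frac{d-1}{d}<1$, $\sum_{k=1}^d x_k=0$, and every sum $y$ of $d/2$ of these vectors (repetitions allowed) satisfies $\|y\|\ge\sqrt{d/8}$ in the Euclidean norm. -/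
open Finset

lemma nat_half_sq (n : ℕ) : (1:ℝ)/4 ≤ ((n:ℝ) - 1/2)^2 := by
  rcases n with _ | m
  · norm_num
  · push_cast
    nlinarith [Nat.cast_nonneg (α := ℝ) m]

theorem simplex_vertices_sum_lower_bound (d : ℕ) (hd : 0 < d) (hev : Even d)
    (x : Fin d → EuclideanSpace ℝ (Fin d))
    (hx : ∀ k i, x k i = (if k = i then (1 : ℝ) else 0) - 1 / (d : ℝ)) :
    (∀ k, ‖x k‖ ^ 2 = ((d : ℝ) - 1) / d) ∧
    (∀ k, ‖x k‖ ^ 2 < 1) ∧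
    (∑ k, x k = 0) ∧
    ∀ c : Fin (d / 2) → Fin d, Real.sqrt ((d : ℝ) / 8) ≤ ‖∑ j, x (c j)‖ := by
  have hd0 : (0:ℝ) < (d:ℝ) := by exact_mod_cast hd
  have hnorm1 : ∀ k, ‖x k‖ ^ 2 = ((d : ℝ) - 1) / d := by
    intro k
    have h1 : ‖x k‖ ^ 2 = ∑ i, (x k i)^2 := by
      rw [EuclideanSpace.norm_eq, Real.sq_sqrt (by positivity)]
      simp [Real.norm_eq_abs, sq_abs]
    rw [h1]
    have : ∀ i, (x k i)^2 = (if k = i then (1 - 1/(d:ℝ))^2 - (1/(d:ℝ))^2 else 0) + (1/(d:ℝ))^2 := by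
      intro i
      rw [hx]
      split <;> ring
    simp only [this, Finset.sum_add_distrib, Finset.sum_ite_eq, Finset.mem_univ, if_true,
      Finset.sum_const, Finset.card_univ, Fintype.card_fin, nsmul_eq_mul]
    field_simp
    ring
  refine ⟨hnorm1, ?_, ?_, ?_⟩
  · intro k
    rw [hnorm1 k, div_lt_one hd0]
    linarith
  · ext i
    have hz : ∑ k, x k i = 0 := by
      simp only [hx]
      rw [Finset.sum_sub_distrib]
      simp only [Finset.sum_ite_eq', Finset.mem_univ, if_true, Finset.sum_const,
        Finset.card_univ, Fintype.card_fin, nsmul_eq_mul]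
      field_simp
      simp
    exact (congrFun (WithLp.ofLp_sum (s := Finset.univ) (f := x)) i).trans ((Finset.sum_apply i Finset.univ _).trans hz)
  · intro c
    set y := ∑ j, x (c j) with hy
    have hyi : ∀ i, y i = (((Finset.univ.filter (fun j => c j = i)).card : ℝ)) - 1/2 := by
      intro i
      have h2 : y i = ∑ j, x (c j) i := by
        rw [hy]; exact (congrFun (WithLp.ofLp_sum (s := Finset.univ) (f := fun j => x (c j))) i).trans (Finset.sum_apply i Finset.univ _)
      rw [h2]
      simp only [hx]
      rw [Finset.sum_sub_distrib, Finset.sum_boole]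
      have hcard : ((d/2 : ℕ) : ℝ) * (1/(d:ℝ)) = 1/2 := by
        obtain ⟨m, hm⟩ := hev
        subst hm
        have hm0 : 0 < m := by omega
        have : (m + m) / 2 = m := by omega
        rw [this]
        have : ((m:ℝ) + m) ≠ 0 := by positivity
        push_cast
        field_simp
        ring
      simp only [Finset.sum_const, Finset.card_univ, Fintype.card_fin, nsmul_eq_mul]
      rw [hcard]
    have hsq : ∀ i, (1:ℝ)/4 ≤ (y i)^2 := by
      intro i; rw [hyi i]; exact nat_half_sq _
    have hnorm : ‖y‖ = Real.sqrt (∑ i, (y i)^2) := by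
      rw [EuclideanSpace.norm_eq]
      simp [Real.norm_eq_abs, sq_abs]
    rw [hnorm]
    apply Real.sqrt_le_sqrt
    calc (d:ℝ)/8 ≤ (d:ℝ)/4 := by linarith
      _ = ∑ _i : Fin d, (1:ℝ)/4 := by
          simp [Finset.sum_const, Finset.card_univ]
          ring
      _ ≤ ∑ i, (y i)^2 := Finset.sum_le_sum fun i _ => hsq i
end
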